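/- arXiv:1605.08108 — 11 statements merged into one kernel-verified Lean document; each statement's English description precedes it below -/
import Mathlib

section
/- For any x, y ∈ C, F(prox(x)) ≤ F(y) + ⟨L·(prox(x) − x), y − x⟩ − (L/2)·‖x − prox(x)‖₂². -/
open scoped RealInnerProductSpace

section Aux
open InnerProductSpace Set

variable {E : Type*} [NormedAddCommGroup E] [InnerProductSpace ℝ E] [CompleteSpace E]

-- chain rule along line
lemma line_hasDerivAt (f : E → ℝ) (f' : E → E) (hf : ∀ x, HasGradientAt f (f' x) x)
    (a b : E) (t : ℝ) :
    HasDerivAt (fun s : ℝ => f (a + s • (b - a))) ⟪f' (a + t • (b - a)), b - a⟫ t := by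
  have hγ : HasDerivAt (fun s : ℝ => a + s • (b - a)) (b - a) t := by
    simpa using ((hasDerivAt_id t).smul_const (b - a)).const_add a
  have := ((hf (a + t • (b - a))).hasFDerivAt).comp_hasDerivAt t hγ
  simpa [toDual_apply_apply, Function.comp_def] using this

-- convexity gradient inequality
lemma grad_conv_ineq (f : E → ℝ) (f' : E → E) (hconv : ConvexOn ℝ Set.univ f)
    (hf : ∀ x, HasGradientAt f (f' x) x) (a b : E) :
    f a + ⟪f' a, b - a⟫ ≤ f b := by
  set g : ℝ → ℝ := fun s => f (a + s • (b - a)) with hg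
  have hgconv : ConvexOn ℝ Set.univ g := by
    have := hconv.comp_affineMap (AffineMap.lineMap a b : ℝ →ᵃ[ℝ] E)
    have he : ∀ s : ℝ, (AffineMap.lineMap a b : ℝ →ᵃ[ℝ] E) s = a + s • (b - a) := by
      intro s; simp [AffineMap.lineMap_apply]; module
    have h2 : ConvexOn ℝ Set.univ (f ∘ (AffineMap.lineMap a b : ℝ →ᵃ[ℝ] E)) := by
      simpa using this
    exact h2.congr (fun s _ => by simp [Function.comp, he, hg])
  have hd : HasDerivAt g ⟪f' a, b - a⟫ 0 := by
    simpa using line_hasDerivAt f f' hf a b 0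
  have := hgconv.le_slope_of_hasDerivAt (mem_univ (0:ℝ)) (mem_univ (1:ℝ)) one_pos hd
  simp [slope_def_field] at this
  have hg0 : g 0 = f a := by simp [hg]
  have hg1 : g 1 = f b := by simp [hg]
  rw [hg0, hg1] at this
  linarith

-- descent lemma
lemma descent_lemma {C : Set E} (hCconv : Convex ℝ C) (L : ℝ) (hL : 0 < L)
    (f : E → ℝ) (f' : E → E) (hf : ∀ x, HasGradientAt f (f' x) x)
    (hflip : ∀ x ∈ C, ∀ y ∈ C, ‖f' x - f' y‖ ≤ L * ‖x - y‖)
    (a b : E) (ha : a ∈ C) (hb : b ∈ C) :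
    f b ≤ f a + ⟪f' a, b - a⟫ + L / 2 * ‖b - a‖ ^ 2 := by
  set γ : ℝ → E := fun s => a + s • (b - a) with hγ
  have hmem : ∀ s ∈ Icc (0:ℝ) 1, γ s ∈ C := by
    intro s hs
    have := hCconv (x := a) (y := b) ha hb (a := 1 - s) (b := s)
      (by linarith [hs.2]) hs.1 (by ring)
    convert this using 1
    simp [hγ, smul_sub, sub_smul]; module
  set g' : ℝ → ℝ := fun s => ⟪f' (γ s), b - a⟫ with hg'
  have hderiv : ∀ s ∈ uIcc (0:ℝ) 1, HasDerivAt (fun s => f (γ s)) (g' s) s :=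
    fun s _ => line_hasDerivAt f f' hf a b s
  have hlip : LipschitzOnWith (L * ‖b - a‖ ^ 2).toNNReal g' (Icc 0 1) := by
    rw [lipschitzOnWith_iff_dist_le_mul]
    intro s hs t ht
    rw [Real.dist_eq, Real.coe_toNNReal _ (by positivity)]
    have h1 : |g' s - g' t| ≤ ‖f' (γ s) - f' (γ t)‖ * ‖b - a‖ := by
      have : g' s - g' t = ⟪f' (γ s) - f' (γ t), b - a⟫ := by
        simp [hg', inner_sub_left]
      rw [this]
      exact abs_real_inner_le_norm _ _
    have h2 : ‖f' (γ s) - f' (γ t)‖ ≤ L * ‖γ s - γ t‖ :=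
      hflip _ (hmem s hs) _ (hmem t ht)
    have h3 : ‖γ s - γ t‖ = |s - t| * ‖b - a‖ := by
      have : γ s - γ t = (s - t) • (b - a) := by simp only [hγ, sub_smul]; module
      rw [this, norm_smul, Real.norm_eq_abs]
    calc |g' s - g' t| ≤ ‖f' (γ s) - f' (γ t)‖ * ‖b - a‖ := h1
      _ ≤ L * ‖γ s - γ t‖ * ‖b - a‖ := by
          exact mul_le_mul_of_nonneg_right h2 (norm_nonneg _)
      _ = L * ‖b - a‖ ^ 2 * dist s t := by rw [h3, Real.dist_eq]; ring
  have hcont : ContinuousOn g' (Icc 0 1) := hlip.continuousOn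
  have hint : IntervalIntegrable g' MeasureTheory.volume 0 1 := by
    apply ContinuousOn.intervalIntegrable
    simpa [uIcc_of_le (zero_le_one (α := ℝ))] using hcont
  have hFTC : f (γ 1) - f (γ 0) = ∫ s in (0:ℝ)..1, g' s :=
    (intervalIntegral.integral_eq_sub_of_hasDerivAt hderiv hint).symm
  have hbound : ∀ s ∈ Icc (0:ℝ) 1, g' s ≤ g' 0 + L * ‖b - a‖ ^ 2 * s := by
    intro s hs
    have h1 : g' s - g' 0 = ⟪f' (γ s) - f' (γ 0), b - a⟫ := by
      simp [hg', inner_sub_left]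
    have h2 : ⟪f' (γ s) - f' (γ 0), b - a⟫ ≤ ‖f' (γ s) - f' (γ 0)‖ * ‖b - a‖ :=
      real_inner_le_norm _ _
    have h3 : ‖f' (γ s) - f' (γ 0)‖ ≤ L * (s * ‖b - a‖) := by
      have := hflip _ (hmem s hs) _ (hmem 0 (by norm_num))
      have h4 : ‖γ s - γ 0‖ = s * ‖b - a‖ := by
        have : γ s - γ 0 = s • (b - a) := by simp [hγ]
        rw [this, norm_smul, Real.norm_eq_abs, abs_of_nonneg hs.1]
      rwa [h4] at this
    nlinarith [norm_nonneg (b - a), hs.1]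
  have hintle : (∫ s in (0:ℝ)..1, g' s) ≤ ∫ s in (0:ℝ)..1, (g' 0 + L * ‖b - a‖ ^ 2 * s) := by
    apply intervalIntegral.integral_mono_on zero_le_one hint
    · exact (Continuous.intervalIntegrable (by continuity) 0 1)
    · exact hbound
  have hval : (∫ s in (0:ℝ)..1, (g' 0 + L * ‖b - a‖ ^ 2 * s)) = g' 0 + L / 2 * ‖b - a‖ ^ 2 := by
    have : (∫ s in (0:ℝ)..1, (g' 0 + L * ‖b - a‖ ^ 2 * s))
        = (∫ s in (0:ℝ)..1, (g' 0 : ℝ)) + ∫ s in (0:ℝ)..1, L * ‖b - a‖ ^ 2 * s := by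
      apply intervalIntegral.integral_add intervalIntegrable_const
      exact (continuous_const.mul continuous_id).intervalIntegrable 0 1
    rw [this, intervalIntegral.integral_const_mul, integral_id]
    simp; ring
  have hγ0 : γ 0 = a := by simp [hγ]
  have hγ1 : γ 1 = b := by simp [hγ]
  have hg'0 : g' 0 = ⟪f' a, b - a⟫ := by simp [hg', hγ0]
  rw [hγ0, hγ1] at hFTC

  rw [hval] at hintle
  rw [hg'0] at hintle
  linarith [hintle, hFTC]

lemma combo_norm_sq (u v : E) (t : ℝ) :
    ‖(1 - t) • u + t • v‖ ^ 2
      = (1 - t) * ‖u‖ ^ 2 + t * ‖v‖ ^ 2 - t * (1 - t) * ‖u - v‖ ^ 2 := by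
  rw [norm_add_sq_real, norm_smul, norm_smul, real_inner_smul_left, real_inner_smul_right,
    norm_sub_sq_real, mul_pow, mul_pow, Real.norm_eq_abs, Real.norm_eq_abs, sq_abs, sq_abs]
  ring

lemma norm_diff_identity (x p y : E) :
    ‖y - x‖ ^ 2 - ‖y - p‖ ^ 2 = 2 * ⟪p - x, y - x⟫ - ‖p - x‖ ^ 2 := by
  have h : y - p = (y - x) - (p - x) := by abel
  have h2 : ‖(y - x) - (p - x)‖ ^ 2
      = ‖y - x‖ ^ 2 - 2 * ⟪y - x, p - x⟫ + ‖p - x‖ ^ 2 := norm_sub_sq_real _ _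
  rw [h, h2, real_inner_comm]
  ring

end Aux

/-- **Gradient Mapping Lemma** (Lemma 1 of FLAG).
For any `x, y ∈ C`:
`F(prox x) ≤ F y + ⟨L•(prox x − x), y − x⟩ − (L/2)‖x − prox x‖₂²`. -/
theorem flag_gradient_mapping
    {d : ℕ} (C : Set (EuclideanSpace ℝ (Fin d)))
    (hCconv : Convex ℝ C) (hCclosed : IsClosed C)
    (L : ℝ) (hL : 0 < L)
    (f h : EuclideanSpace ℝ (Fin d) → ℝ)
    (f' : EuclideanSpace ℝ (Fin d) → EuclideanSpace ℝ (Fin d))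
    (hfconv : ConvexOn ℝ Set.univ f) (hhconv : ConvexOn ℝ Set.univ h)
    (hfdiff : ∀ x, HasGradientAt f (f' x) x)
    (hflip : ∀ x ∈ C, ∀ y ∈ C, ‖f' x - f' y‖ ≤ L * ‖x - y‖)
    (prox : EuclideanSpace ℝ (Fin d) → EuclideanSpace ℝ (Fin d))
    (hprox : ∀ x ∈ C, prox x ∈ C ∧ ∀ w ∈ C,
      h (prox x) + ⟪f' x, prox x - x⟫ + L / 2 * ‖prox x - x‖ ^ 2
        ≤ h w + ⟪f' x, w - x⟫ + L / 2 * ‖w - x‖ ^ 2)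
    (F : EuclideanSpace ℝ (Fin d) → ℝ) (hF : ∀ v, F v = f v + h v)
    (x y : EuclideanSpace ℝ (Fin d)) (hx : x ∈ C) (hy : y ∈ C) :
    F (prox x) ≤ F y + ⟪L • (prox x - x), y - x⟫ - L / 2 * ‖x - prox x‖ ^ 2 := by

  obtain ⟨hpC, hmin⟩ := hprox x hx
  set p := prox x with hp
  set q : EuclideanSpace ℝ (Fin d) → ℝ :=
    fun w => h w + ⟪f' x, w - x⟫ + L / 2 * ‖w - x‖ ^ 2 with hq
  -- strong convexity refinement
  have hstrong : q p ≤ q y - L / 2 * ‖p - y‖ ^ 2 := by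
    have key : ∀ t : ℝ, t ∈ Set.Ioc (0:ℝ) 1 →
        q p ≤ q y - L / 2 * (1 - t) * ‖p - y‖ ^ 2 := by
      intro t ht
      have ht0 := ht.1
      have ht1 := ht.2
      set w : EuclideanSpace ℝ (Fin d) := (1 - t) • p + t • y with hw
      have hwC : w ∈ C := hCconv hpC hy (by linarith) (le_of_lt ht0) (by ring)
      have hqw := hmin w hwC
      have hhw : h w ≤ (1 - t) * h p + t * h y :=
        hhconv.2 (Set.mem_univ p) (Set.mem_univ y) (by linarith) (le_of_lt ht0) (by ring)
      have hwx : w - x = (1 - t) • (p - x) + t • (y - x) := by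
        simp only [hw, smul_sub, sub_smul]; module
      have hinner : ⟪f' x, w - x⟫ = (1 - t) * ⟪f' x, p - x⟫ + t * ⟪f' x, y - x⟫ := by
        rw [hwx, inner_add_right, real_inner_smul_right, real_inner_smul_right]
      have hnorm : ‖w - x‖ ^ 2
          = (1 - t) * ‖p - x‖ ^ 2 + t * ‖y - x‖ ^ 2 - t * (1 - t) * ‖p - y‖ ^ 2 := by
        rw [hwx, combo_norm_sq]
        congr 3
        abel
      have hqwle : q w ≤ (1 - t) * q p + t * q y - L / 2 * (t * (1 - t)) * ‖p - y‖ ^ 2 := by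
        simp only [hq]
        rw [hinner, hnorm]
        nlinarith [hhw]
      have hthis : q p ≤ (1 - t) * q p + t * q y - L / 2 * (t * (1 - t)) * ‖p - y‖ ^ 2 :=
        hqw.trans hqwle
      have h6 : t * q p ≤ t * (q y - L / 2 * (1 - t) * ‖p - y‖ ^ 2) := by nlinarith [hthis]
      exact le_of_mul_le_mul_left h6 ht0
    have htend : Filter.Tendsto (fun t : ℝ => q y - L / 2 * (1 - t) * ‖p - y‖ ^ 2)
        (nhdsWithin 0 (Set.Ioi 0)) (nhds (q y - L / 2 * ‖p - y‖ ^ 2)) := by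
      have hcont : Continuous (fun t : ℝ => q y - L / 2 * (1 - t) * ‖p - y‖ ^ 2) :=
        continuous_const.sub
          (((continuous_const.mul (continuous_const.sub continuous_id)).mul continuous_const))
      have h7 := (hcont.tendsto 0).mono_left
        (nhdsWithin_le_nhds (s := Set.Ioi (0:ℝ)))
      simpa using h7
    refine ge_of_tendsto htend ?_
    filter_upwards [Ioc_mem_nhdsGT_of_mem (Set.left_mem_Ico.mpr one_pos)] with t ht
    exact key t ht
  -- descent lemma at p
  have hdesc : f p ≤ f x + ⟪f' x, p - x⟫ + L / 2 * ‖p - x‖ ^ 2 :=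
    descent_lemma hCconv L hL f f' hfdiff hflip x p hx hpC
  -- convexity at y
  have hconv : f x + ⟪f' x, y - x⟫ ≤ f y := grad_conv_ineq f f' hfconv hfdiff x y
  -- assemble
  have hid : ‖y - x‖ ^ 2 - ‖y - p‖ ^ 2 = 2 * ⟪p - x, y - x⟫ - ‖p - x‖ ^ 2 :=
    norm_diff_identity x p y
  have hsm : ⟪L • (p - x), y - x⟫ = L * ⟪p - x, y - x⟫ := real_inner_smul_left _ _ _
  have hn1 : ‖x - p‖ = ‖p - x‖ := norm_sub_rev _ _
  have hn2 : ‖p - y‖ = ‖y - p‖ := norm_sub_rev _ _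
  rw [hF, hF, hsm, hn1]
  simp only [hq] at hstrong
  rw [hn2] at hstrong
  have hmul : L / 2 * (‖y - x‖ ^ 2 - ‖y - p‖ ^ 2)
      = L / 2 * (2 * ⟪p - x, y - x⟫ - ‖p - x‖ ^ 2) := by rw [hid]
  nlinarith [hstrong, hdesc, hconv, hmul]
end

section
/- For any x ∈ C, F(prox(x)) ≤ F(x) − (L/2)·‖x − prox(x)‖₂². -/
open scoped RealInnerProductSpace

/-- Descent property of the prox step (special case of the Gradient Mapping Lemma):
for any `x ∈ C`, `F(prox x) ≤ F x − (L/2)‖x − prox x‖₂²`. -/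
theorem flag_prox_descent
    {d : ℕ} (C : Set (EuclideanSpace ℝ (Fin d)))
    (hCconv : Convex ℝ C) (hCclosed : IsClosed C)
    (L : ℝ) (hL : 0 < L)
    (f h : EuclideanSpace ℝ (Fin d) → ℝ)
    (f' : EuclideanSpace ℝ (Fin d) → EuclideanSpace ℝ (Fin d))
    (hfconv : ConvexOn ℝ Set.univ f) (hhconv : ConvexOn ℝ Set.univ h)
    (hfdiff : ∀ x, HasGradientAt f (f' x) x)
    (hflip : ∀ x ∈ C, ∀ y ∈ C, ‖f' x - f' y‖ ≤ L * ‖x - y‖)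
    (prox : EuclideanSpace ℝ (Fin d) → EuclideanSpace ℝ (Fin d))
    (hprox : ∀ x ∈ C, prox x ∈ C ∧ ∀ w ∈ C,
      h (prox x) + ⟪f' x, prox x - x⟫ + L / 2 * ‖prox x - x‖ ^ 2
        ≤ h w + ⟪f' x, w - x⟫ + L / 2 * ‖w - x‖ ^ 2)
    (F : EuclideanSpace ℝ (Fin d) → ℝ) (hF : ∀ v, F v = f v + h v)
    (x : EuclideanSpace ℝ (Fin d)) (hx : x ∈ C) :
    F (prox x) ≤ F x - L / 2 * ‖x - prox x‖ ^ 2 := by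
  obtain ⟨hpC, hmin⟩ := hprox x hx
  set p := prox x with hp
  set v : EuclideanSpace ℝ (Fin d) := p - x with hv
  set a : ℝ := ⟪f' x, v⟫ with ha
  set c : ℝ := L / 2 * ‖v‖ ^ 2 with hc
  have hc0 : 0 ≤ c := by positivity
  have hxpv : x + v = p := by simp [hv]
  -- Descent lemma: f p ≤ f x + a + c
  have hg : ∀ t : ℝ, HasDerivAt (fun t : ℝ => f (x + t • v))
      ⟪f' (x + t • v), v⟫ t := by
    intro t
    have h1 : HasDerivAt (fun t : ℝ => x + t • v) v t :=
      by simpa using ((hasDerivAt_id t).smul_const v).const_add x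
    have h2 := (hfdiff (x + t • v)).hasFDerivAt.comp_hasDerivAt t h1
    simpa [InnerProductSpace.toDual_apply_apply, Function.comp_def] using h2
  have hGderiv : ∀ t : ℝ, HasDerivAt
      (fun t : ℝ => f (x + t • v) - t * a - t ^ 2 * c)
      (⟪f' (x + t • v), v⟫ - a - 2 * t * c) t := by
    intro t
    have := ((hg t).sub ((hasDerivAt_id t).mul_const a)).sub
      (((hasDerivAt_pow 2 t)).mul_const c)
    simpa [mul_comm, mul_assoc, mul_left_comm, Pi.sub_def] using this
  have hanti : AntitoneOn (fun t : ℝ => f (x + t • v) - t * a - t ^ 2 * c)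
      (Set.Icc (0:ℝ) 1) := by
    apply antitoneOn_of_deriv_nonpos (convex_Icc 0 1)
    · exact fun t _ => ((hGderiv t).continuousAt).continuousWithinAt
    · exact fun t _ => ((hGderiv t).differentiableAt).differentiableWithinAt
    · intro t ht
      rw [interior_Icc] at ht
      rw [(hGderiv t).deriv]
      have hmem : x + t • v ∈ C := by
        have := hCconv.add_smul_sub_mem hx hpC
          (Set.mem_Icc.2 ⟨le_of_lt ht.1, le_of_lt ht.2⟩)
        simpa [hv] using this
      have hvnorm : ‖x + t • v - x‖ = t * ‖v‖ := by
        simp [norm_smul, abs_of_pos ht.1]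
      have hlip := hflip _ hmem _ hx
      have hinner : ⟪f' (x + t • v) - f' x, v⟫ ≤ L * (t * ‖v‖) * ‖v‖ := by
        calc ⟪f' (x + t • v) - f' x, v⟫ ≤ ‖f' (x + t • v) - f' x‖ * ‖v‖ :=
              real_inner_le_norm _ _
          _ ≤ L * ‖x + t • v - x‖ * ‖v‖ := by
              apply mul_le_mul_of_nonneg_right hlip (norm_nonneg _)
          _ = L * (t * ‖v‖) * ‖v‖ := by rw [hvnorm]
      have hsplit : ⟪f' (x + t • v), v⟫ - a = ⟪f' (x + t • v) - f' x, v⟫ := by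
        rw [inner_sub_left]
      have h2tc : 2 * t * c = L * (t * ‖v‖) * ‖v‖ := by
        rw [hc]; ring
      nlinarith [hinner, hsplit]
  have hdescent : f p ≤ f x + a + c := by
    have := hanti (Set.left_mem_Icc.2 zero_le_one) (Set.right_mem_Icc.2 zero_le_one)
      zero_le_one
    simp only [zero_smul, add_zero, one_smul, zero_mul, sub_zero, one_pow, one_mul,
      zero_pow] at this
    rw [hxpv] at this
    linarith
  -- Strong minimality: h p + a + 2c ≤ h x
  have hkey : ∀ t : ℝ, 0 < t → t ≤ 1 → h p + a + (2 - t) * c ≤ h x := by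
    intro t ht0 ht1
    set w : EuclideanSpace ℝ (Fin d) := (1 - t) • p + t • x with hw
    have hwC : w ∈ C := hCconv hpC hx (by linarith) (le_of_lt ht0) (by ring)
    have hwx : w - x = (1 - t) • v := by
      rw [hw, hv]; module
    have hmin' := hmin w hwC
    have hinner : ⟪f' x, w - x⟫ = (1 - t) * a := by
      rw [hwx, real_inner_smul_right, ha]
    have hnorm : ‖w - x‖ ^ 2 = (1 - t) ^ 2 * ‖v‖ ^ 2 := by
      rw [hwx, norm_smul]
      rw [mul_pow, Real.norm_eq_abs, sq_abs]
    have hconv : h w ≤ (1 - t) * h p + t * h x := by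
      have := hhconv.2 (Set.mem_univ p) (Set.mem_univ x)
        (by linarith : (0:ℝ) ≤ 1 - t) (le_of_lt ht0) (by ring)
      simpa [hw] using this
    have hpx : ‖p - x‖ ^ 2 = ‖v‖ ^ 2 := by rw [hv]
    rw [hinner] at hmin'
    have hquad : L / 2 * ‖w - x‖ ^ 2 = (1 - t) ^ 2 * c := by
      rw [hnorm, hc]; ring
    rw [hquad] at hmin'
    have : h p + a + c ≤ (1 - t) * h p + t * h x + (1 - t) * a + (1 - t) ^ 2 * c := by
      have hac : h p + ⟪f' x, p - x⟫ + L / 2 * ‖p - x‖ ^ 2 = h p + a + c := by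
        rw [ha, hc, hv, hpx]
      linarith [hmin', hconv]
    nlinarith [this]
  have hstrong : h p + a + 2 * c ≤ h x := by
    rcases eq_or_lt_of_le hc0 with hceq | hcpos
    · have := hkey 1 one_pos le_rfl
      rw [← hceq] at this ⊢
      linarith
    · apply le_of_forall_pos_le_add
      intro ε hε
      set t : ℝ := min 1 (ε / c) with htdef
      have ht0 : 0 < t := lt_min one_pos (div_pos hε hcpos)
      have ht1 : t ≤ 1 := min_le_left _ _
      have htc : t * c ≤ ε := by
        have : t ≤ ε / c := min_le_right _ _
        calc t * c ≤ (ε / c) * c := mul_le_mul_of_nonneg_right this hc0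
          _ = ε := by field_simp
      have := hkey t ht0 ht1
      nlinarith
  have hnorm' : ‖x - p‖ ^ 2 = ‖v‖ ^ 2 := by rw [hv, norm_sub_rev]
  rw [hF, hF]
  have : L / 2 * ‖x - p‖ ^ 2 = c := by rw [hnorm', hc]
  rw [this]
  linarith
end

section
/- The prox operator is 2-Lipschitz continuous: for any x, y ∈ C, ‖prox(x) − prox(y)‖₂ ≤ 2‖x − y‖₂. -/
open scoped RealInnerProductSpace

lemma flag_prox_aux_strong
    {E : Type*} [NormedAddCommGroup E] [InnerProductSpace ℝ E]
    {C : Set E} (hC : Convex ℝ C) {h : E → ℝ} (hh : ConvexOn ℝ Set.univ h)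
    (g x u : E) {L : ℝ} (hL : 0 < L) (hu : u ∈ C)
    (hmin : ∀ w ∈ C, h u + ⟪g, u - x⟫ + L / 2 * ‖u - x‖ ^ 2
        ≤ h w + ⟪g, w - x⟫ + L / 2 * ‖w - x‖ ^ 2)
    {w : E} (hw : w ∈ C) :
    h u + ⟪g, u - x⟫ + L / 2 * ‖u - x‖ ^ 2 + L / 2 * ‖w - u‖ ^ 2
      ≤ h w + ⟪g, w - x⟫ + L / 2 * ‖w - x‖ ^ 2 := by
  set A : ℝ := L / 2 * ‖w - u‖ ^ 2 with hA
  set B : ℝ := (h w + ⟪g, w - x⟫ + L / 2 * ‖w - x‖ ^ 2)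
      - (h u + ⟪g, u - x⟫ + L / 2 * ‖u - x‖ ^ 2) with hB
  have hA0 : 0 ≤ A := by positivity
  have key : ∀ t : ℝ, 0 < t → t ≤ 1 → (1 - t) * A ≤ B := by
    intro t ht0 ht1
    set z : E := u + t • (w - u) with hz
    have hzC : z ∈ C := by
      have := hC hu hw (by linarith : (0:ℝ) ≤ 1 - t) (le_of_lt ht0) (by ring)
      have hzeq : (1 - t) • u + t • w = z := by
        simp [hz, smul_sub, sub_smul]
        abel
      rwa [hzeq] at this
    have hhz : h z ≤ (1 - t) * h u + t * h w := by
      have hzeq : z = (1 - t) • u + t • w := by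
        simp [hz, smul_sub, sub_smul]
        abel
      rw [hzeq]
      exact hh.2 (Set.mem_univ u) (Set.mem_univ w)
        (by linarith) (le_of_lt ht0) (by ring)
    have hinner : ⟪g, z - x⟫ = (1 - t) * ⟪g, u - x⟫ + t * ⟪g, w - x⟫ := by
      have hzeq : z - x = (1 - t) • (u - x) + t • (w - x) := by
        simp [hz, smul_sub, sub_smul]
        abel
      rw [hzeq, inner_add_right, real_inner_smul_right, real_inner_smul_right]
    have hnorm : ‖z - x‖ ^ 2
        = (1 - t) * ‖u - x‖ ^ 2 + t * ‖w - x‖ ^ 2 - t * (1 - t) * ‖w - u‖ ^ 2 := by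
      have hzeq : z - x = (u - x) + t • (w - u) := by
        simp only [hz]; abel
      have h1 : ‖(u - x) + t • (w - u)‖ ^ 2
          = ‖u - x‖ ^ 2 + 2 * ⟪u - x, t • (w - u)⟫ + ‖t • (w - u)‖ ^ 2 :=
        norm_add_sq_real _ _
      have h2 : ⟪u - x, t • (w - u)⟫ = t * ⟪u - x, w - u⟫ := real_inner_smul_right _ _ _
      have h3 : ‖t • (w - u)‖ ^ 2 = t ^ 2 * ‖w - u‖ ^ 2 := by
        rw [norm_smul, mul_pow, Real.norm_eq_abs, sq_abs]
      have h4 : ‖w - u‖ ^ 2 = ‖(w - x) - (u - x)‖ ^ 2 := by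
        congr 1; congr 1; abel
      have h5 : ‖(w - x) - (u - x)‖ ^ 2
          = ‖w - x‖ ^ 2 - 2 * ⟪w - x, u - x⟫ + ‖u - x‖ ^ 2 := norm_sub_sq_real _ _
      have h6 : ⟪u - x, w - u⟫ = ⟪u - x, (w - x) - (u - x)⟫ := by
        congr 1; abel
      have h7 : ⟪u - x, (w - x) - (u - x)⟫ = ⟪u - x, w - x⟫ - ‖u - x‖ ^ 2 := by
        rw [inner_sub_right, real_inner_self_eq_norm_sq]
      have h8 : ⟪w - x, u - x⟫ = ⟪u - x, w - x⟫ := real_inner_comm _ _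
      rw [hzeq, h1, h2, h3, h4, h5, h6, h7, h8]
      ring
    have hm := hmin z hzC
    rw [hinner, hnorm] at hm
    have : t * ((1 - t) * A) ≤ t * B := by
      simp only [hA, hB]
      nlinarith [hm, hhz]
    exact le_of_mul_le_mul_left this ht0
  have hAB : A ≤ B := by
    refine le_of_forall_pos_le_add ?_
    intro ε hε
    set t : ℝ := min 1 (ε / (A + 1)) with htdef
    have ht0 : 0 < t := lt_min one_pos (by positivity)
    have ht1 : t ≤ 1 := min_le_left _ _
    have hk := key t ht0 ht1
    have h2 : t ≤ ε / (A + 1) := min_le_right _ _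
    have h3 : t * A ≤ ε := by
      have hAe : ε / (A + 1) * A ≤ ε := by
        rw [div_mul_eq_mul_div, div_le_iff₀ (by linarith)]
        nlinarith
      nlinarith
    have hexp : (1 - t) * A = A - t * A := by ring
    linarith [hk, h3, hexp.symm.le, hexp.le]
  simp only [hA, hB] at hAB
  linarith

/-- **Prox Operator Continuity** (Lemma 2): the prox operator is 2-Lipschitz on `C`. -/
theorem flag_prox_two_lipschitz
    {d : ℕ} (C : Set (EuclideanSpace ℝ (Fin d)))
    (hCconv : Convex ℝ C) (hCclosed : IsClosed C)
    (L : ℝ) (hL : 0 < L)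
    (f h : EuclideanSpace ℝ (Fin d) → ℝ)
    (f' : EuclideanSpace ℝ (Fin d) → EuclideanSpace ℝ (Fin d))
    (hfconv : ConvexOn ℝ Set.univ f) (hhconv : ConvexOn ℝ Set.univ h)
    (hfdiff : ∀ x, HasGradientAt f (f' x) x)
    (hflip : ∀ x ∈ C, ∀ y ∈ C, ‖f' x - f' y‖ ≤ L * ‖x - y‖)
    (prox : EuclideanSpace ℝ (Fin d) → EuclideanSpace ℝ (Fin d))
    (hprox : ∀ x ∈ C, prox x ∈ C ∧ ∀ w ∈ C,
      h (prox x) + ⟪f' x, prox x - x⟫ + L / 2 * ‖prox x - x‖ ^ 2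
        ≤ h w + ⟪f' x, w - x⟫ + L / 2 * ‖w - x‖ ^ 2)
    (x y : EuclideanSpace ℝ (Fin d)) (hx : x ∈ C) (hy : y ∈ C) :
    ‖prox x - prox y‖ ≤ 2 * ‖x - y‖ := by
  obtain ⟨huC, hux⟩ := hprox x hx
  obtain ⟨hvC, hvy⟩ := hprox y hy
  set u := prox x
  set v := prox y
  have H1 := flag_prox_aux_strong hCconv hhconv (f' x) x u hL huC hux hvC
  have H2 := flag_prox_aux_strong hCconv hhconv (f' y) y v hL hvC hvy huC
  -- combine: L * ‖u - v‖^2 ≤ ⟪f' x - f' y, v - u⟫ + L * ⟪u - v, x - y⟫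
  have key : L * ‖u - v‖ ^ 2 ≤ ⟪f' x - f' y, v - u⟫ + L * ⟪u - v, x - y⟫ := by
    have e1 : ‖v - u‖ ^ 2 = ‖u - v‖ ^ 2 := by rw [norm_sub_rev]
    have e2 : ‖u - x‖ ^ 2 = ‖u‖ ^ 2 - 2 * ⟪u, x⟫ + ‖x‖ ^ 2 := norm_sub_sq_real _ _
    have e3 : ‖v - x‖ ^ 2 = ‖v‖ ^ 2 - 2 * ⟪v, x⟫ + ‖x‖ ^ 2 := norm_sub_sq_real _ _
    have e4 : ‖u - y‖ ^ 2 = ‖u‖ ^ 2 - 2 * ⟪u, y⟫ + ‖y‖ ^ 2 := norm_sub_sq_real _ _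
    have e5 : ‖v - y‖ ^ 2 = ‖v‖ ^ 2 - 2 * ⟪v, y⟫ + ‖y‖ ^ 2 := norm_sub_sq_real _ _
    have e6 : ⟪f' x, u - x⟫ = ⟪f' x, u⟫ - ⟪f' x, x⟫ := inner_sub_right _ _ _
    have e7 : ⟪f' x, v - x⟫ = ⟪f' x, v⟫ - ⟪f' x, x⟫ := inner_sub_right _ _ _
    have e8 : ⟪f' y, u - y⟫ = ⟪f' y, u⟫ - ⟪f' y, y⟫ := inner_sub_right _ _ _
    have e9 : ⟪f' y, v - y⟫ = ⟪f' y, v⟫ - ⟪f' y, y⟫ := inner_sub_right _ _ _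
    have e10 : ⟪f' x - f' y, v - u⟫
        = ⟪f' x, v⟫ - ⟪f' x, u⟫ - ⟪f' y, v⟫ + ⟪f' y, u⟫ := by
      rw [inner_sub_left, inner_sub_right, inner_sub_right]; ring
    have e11 : ⟪u - v, x - y⟫ = ⟪u, x⟫ - ⟪u, y⟫ - ⟪v, x⟫ + ⟪v, y⟫ := by
      rw [inner_sub_left, inner_sub_right, inner_sub_right]; ring
    rw [e1, e2, e3, e6, e7] at H1
    rw [e4, e5, e8, e9] at H2
    rw [e10, e11]
    nlinarith [H1, H2]
  have cs1 : ⟪f' x - f' y, v - u⟫ ≤ L * ‖x - y‖ * ‖u - v‖ := by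
    calc ⟪f' x - f' y, v - u⟫ ≤ ‖f' x - f' y‖ * ‖v - u‖ := real_inner_le_norm _ _
      _ ≤ (L * ‖x - y‖) * ‖v - u‖ := by
          apply mul_le_mul_of_nonneg_right (hflip x hx y hy) (norm_nonneg _)
      _ = L * ‖x - y‖ * ‖u - v‖ := by rw [norm_sub_rev v u]
  have cs2 : ⟪u - v, x - y⟫ ≤ ‖u - v‖ * ‖x - y‖ := real_inner_le_norm _ _
  have hfin : L * ‖u - v‖ ^ 2 ≤ 2 * L * ‖x - y‖ * ‖u - v‖ := by nlinarith
  rcases eq_or_lt_of_le (norm_nonneg (u - v)) with h0 | h0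
  · rw [← h0]; positivity
  · nlinarith [hfin, mul_pos hL h0, h0]
end

section
/- Let y, z ∈ C, let ε > 0, and let t, t* ∈ [0,1] with |t − t*| ≤ ε. Set w := t*·y + (1−t*)·z and x := t·y + (1−t)·z. If ⟨prox(w) − w, y − z⟩ = 0, then |⟨prox(x) − x, y − z⟩| ≤ 3ε·‖y − z‖₂². -/
open scoped RealInnerProductSpace

/-- Variational inequality for the minimizer of `h + (L/2)‖· - a‖²` over a convex set. -/
lemma flag_var_ineq {d : ℕ} (C : Set (EuclideanSpace ℝ (Fin d))) (hCconv : Convex ℝ C)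
    (h : EuclideanSpace ℝ (Fin d) → ℝ) (hh : ConvexOn ℝ Set.univ h)
    (L : ℝ) (hL : 0 < L) (a p : EuclideanSpace ℝ (Fin d)) (hp : p ∈ C)
    (hmin : ∀ u ∈ C, h p + L / 2 * ‖p - a‖ ^ 2 ≤ h u + L / 2 * ‖u - a‖ ^ 2)
    (u : EuclideanSpace ℝ (Fin d)) (hu : u ∈ C) :
    L * ⟪a - p, u - p⟫ ≤ h u - h p := by
  set M : ℝ := ‖u - p‖ ^ 2 with hM
  have hM0 : 0 ≤ M := sq_nonneg _
  set K : ℝ := h u - h p + L * ⟪p - a, u - p⟫ with hK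
  have claim : ∀ s : ℝ, 0 < s → s ≤ 1 → 0 ≤ K + L * s / 2 * M := by
    intro s hs0 hs1
    have hvC : (1 - s) • p + s • u ∈ C :=
      hCconv hp hu (by linarith) (le_of_lt hs0) (by ring)
    have hmin' := hmin _ hvC
    have hhv : h ((1 - s) • p + s • u) ≤ (1 - s) * h p + s * h u :=
      hh.2 (Set.mem_univ p) (Set.mem_univ u) (by linarith) (le_of_lt hs0) (by ring)
    have hvexp : (1 - s) • p + s • u - a = (p - a) + s • (u - p) := by module
    have hnorm : ‖(1 - s) • p + s • u - a‖ ^ 2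
        = ‖p - a‖ ^ 2 + 2 * (s * ⟪p - a, u - p⟫) + s ^ 2 * M := by
      rw [hvexp, norm_add_sq_real, real_inner_smul_right, norm_smul]
      simp [mul_pow, hM, Real.norm_eq_abs, sq_abs]
    nlinarith [hmin', hhv, hnorm, hs0, hL]
  have hK0 : 0 ≤ K := by
    by_contra hneg
    push_neg at hneg
    set s : ℝ := min 1 (-K / (L * M + 1)) with hs
    have hLM1 : 0 < L * M + 1 := by nlinarith
    have hs0 : 0 < s := by
      apply lt_min one_pos
      apply div_pos (by linarith) hLM1
    have hs1 : s ≤ 1 := min_le_left _ _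
    have hs2 : s ≤ -K / (L * M + 1) := min_le_right _ _
    have hs3 : s * (L * M + 1) ≤ -K := by
      rw [← le_div_iff₀ hLM1]; exact hs2
    have := claim s hs0 hs1
    nlinarith [hs0, hL, hM0]
  have : ⟪a - p, u - p⟫ = -⟪p - a, u - p⟫ := by
    rw [show a - p = -(p - a) by abel, inner_neg_left]
  rw [this]
  linarith [hK0]

set_option maxHeartbeats 1000000 in
/-- **Binary Search Lemma** (Lemma 3, case (iii)): accuracy guarantee for the
output of the bisection routine. -/
theorem flag_binary_search_accuracy
    {d : ℕ} (C : Set (EuclideanSpace ℝ (Fin d)))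
    (hCconv : Convex ℝ C) (hCclosed : IsClosed C)
    (L : ℝ) (hL : 0 < L)
    (f h : EuclideanSpace ℝ (Fin d) → ℝ)
    (f' : EuclideanSpace ℝ (Fin d) → EuclideanSpace ℝ (Fin d))
    (hfconv : ConvexOn ℝ Set.univ f) (hhconv : ConvexOn ℝ Set.univ h)
    (hfdiff : ∀ x, HasGradientAt f (f' x) x)
    (hflip : ∀ x ∈ C, ∀ y ∈ C, ‖f' x - f' y‖ ≤ L * ‖x - y‖)
    (prox : EuclideanSpace ℝ (Fin d) → EuclideanSpace ℝ (Fin d))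
    (hprox : ∀ x ∈ C, prox x ∈ C ∧ ∀ w ∈ C,
      h (prox x) + ⟪f' x, prox x - x⟫ + L / 2 * ‖prox x - x‖ ^ 2
        ≤ h w + ⟪f' x, w - x⟫ + L / 2 * ‖w - x‖ ^ 2)
    (y z : EuclideanSpace ℝ (Fin d)) (hy : y ∈ C) (hz : z ∈ C)
    (ε : ℝ) (hε : 0 < ε)
    (t tstar : ℝ) (ht : t ∈ Set.Icc (0 : ℝ) 1) (htstar : tstar ∈ Set.Icc (0 : ℝ) 1)
    (htclose : |t - tstar| ≤ ε)
    (w x : EuclideanSpace ℝ (Fin d))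
    (hw : w = tstar • y + (1 - tstar) • z)
    (hx : x = t • y + (1 - t) • z)
    (hroot : ⟪prox w - w, y - z⟫ = 0) :
    |⟪prox x - x, y - z⟫| ≤ 3 * ε * ‖y - z‖ ^ 2 := by
  have hxC : x ∈ C := by
    rw [hx]; exact hCconv hy hz ht.1 (by linarith [ht.2]) (by ring)
  have hwC : w ∈ C := by
    rw [hw]; exact hCconv hy hz htstar.1 (by linarith [htstar.2]) (by ring)
  -- a-form of the prox objective
  have key : ∀ v q : EuclideanSpace ℝ (Fin d),
      ⟪f' q, v - q⟫ + L / 2 * ‖v - q‖ ^ 2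
        = L / 2 * ‖v - (q - L⁻¹ • f' q)‖ ^ 2 - ‖f' q‖ ^ 2 / (2 * L) := by
    intro v q
    have hexp : v - (q - L⁻¹ • f' q) = (v - q) + L⁻¹ • f' q := by module
    rw [hexp, norm_add_sq_real, real_inner_smul_right, norm_smul]
    rw [Real.norm_eq_abs, abs_of_pos (inv_pos.mpr hL)]
    rw [real_inner_comm (f' q) (v - q)]
    field_simp
    ring
  have hminform : ∀ q ∈ C, ∀ u ∈ C,
      h (prox q) + L / 2 * ‖prox q - (q - L⁻¹ • f' q)‖ ^ 2
        ≤ h u + L / 2 * ‖u - (q - L⁻¹ • f' q)‖ ^ 2 := by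
    intro q hq u hu
    have := (hprox q hq).2 u hu
    have h1 := key (prox q) q
    have h2 := key u q
    linarith
  set px := prox x with hpx
  set pw := prox w with hpw
  set ax := x - L⁻¹ • f' x with hax
  set aw := w - L⁻¹ • f' w with haw
  have hpxC : px ∈ C := (hprox x hxC).1
  have hpwC : pw ∈ C := (hprox w hwC).1
  have v1 : L * ⟪ax - px, pw - px⟫ ≤ h pw - h px :=
    flag_var_ineq C hCconv h hhconv L hL ax px hpxC (hminform x hxC) pw hpwC
  have v2 : L * ⟪aw - pw, px - pw⟫ ≤ h px - h pw :=
    flag_var_ineq C hCconv h hhconv L hL aw pw hpwC (hminform w hwC) px hpxC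
  have hsum : ⟪ax - px, pw - px⟫ + ⟪aw - pw, px - pw⟫ ≤ 0 := by
    have hLpos := hL
    nlinarith [v1, v2]
  have hexpand : ⟪ax - px, pw - px⟫ + ⟪aw - pw, px - pw⟫
      = ⟪ax - aw, pw - px⟫ + ‖px - pw‖ ^ 2 := by
    simp only [inner_sub_left, inner_sub_right, real_inner_self_eq_norm_sq]
    rw [show ‖px - pw‖ ^ 2 = ‖px‖^2 - 2*⟪px,pw⟫ + ‖pw‖^2 from norm_sub_sq_real px pw]
    linarith [real_inner_comm pw px]
  have hCS : ⟪ax - aw, px - pw⟫ ≤ ‖ax - aw‖ * ‖px - pw‖ := real_inner_le_norm _ _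
  have hinner_flip : ⟪ax - aw, pw - px⟫ = -⟪ax - aw, px - pw⟫ := by
    rw [show pw - px = -(px - pw) by abel, inner_neg_right]
  have hsq : ‖px - pw‖ ^ 2 ≤ ‖ax - aw‖ * ‖px - pw‖ := by
    rw [hexpand, hinner_flip] at hsum
    linarith
  have haaw : ‖ax - aw‖ ≤ 2 * ‖x - w‖ := by
    have h1 : ax - aw = (x - w) - L⁻¹ • (f' x - f' w) := by
      rw [hax, haw]; module
    have h2 : ‖L⁻¹ • (f' x - f' w)‖ = L⁻¹ * ‖f' x - f' w‖ := by
      rw [norm_smul, Real.norm_eq_abs, abs_of_pos (inv_pos.mpr hL)]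
    have h3 : ‖f' x - f' w‖ ≤ L * ‖x - w‖ := hflip x hxC w hwC
    calc ‖ax - aw‖ ≤ ‖x - w‖ + ‖L⁻¹ • (f' x - f' w)‖ := by
          rw [h1]; exact norm_sub_le _ _
      _ ≤ ‖x - w‖ + L⁻¹ * (L * ‖x - w‖) := by
          rw [h2]; gcongr
      _ = 2 * ‖x - w‖ := by field_simp; ring
  have hlip : ‖px - pw‖ ≤ 2 * ‖x - w‖ := by
    rcases eq_or_lt_of_le (norm_nonneg (px - pw)) with h0 | h0
    · rw [← h0]; positivity
    · nlinarith [hsq, haaw, h0]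
  have hxw : x - w = (t - tstar) • (y - z) := by
    rw [hx, hw]; module
  have hxwnorm : ‖x - w‖ ≤ ε * ‖y - z‖ := by
    rw [hxw, norm_smul, Real.norm_eq_abs]
    exact mul_le_mul_of_nonneg_right htclose (norm_nonneg _)
  have hdec : ⟪px - x, y - z⟫ = ⟪(px - pw) - (x - w), y - z⟫ + ⟪pw - w, y - z⟫ := by
    rw [← inner_add_left]
    congr 1
    module
  have hbound : |⟪px - x, y - z⟫| ≤ (‖px - pw‖ + ‖x - w‖) * ‖y - z‖ := by
    rw [hdec, hroot, add_zero]
    calc |⟪(px - pw) - (x - w), y - z⟫| ≤ ‖(px - pw) - (x - w)‖ * ‖y - z‖ :=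
          abs_real_inner_le_norm _ _
      _ ≤ (‖px - pw‖ + ‖x - w‖) * ‖y - z‖ := by
          gcongr; exact norm_sub_le _ _
  have hyz0 : (0:ℝ) ≤ ‖y - z‖ := norm_nonneg _
  have hsum3 : ‖px - pw‖ + ‖x - w‖ ≤ 3 * (ε * ‖y - z‖) := by linarith
  have hfin : (‖px - pw‖ + ‖x - w‖) * ‖y - z‖ ≤ 3 * (ε * ‖y - z‖) * ‖y - z‖ :=
    mul_le_mul_of_nonneg_right hsum3 hyz0
  have : 3 * (ε * ‖y - z‖) * ‖y - z‖ = 3 * ε * ‖y - z‖ ^ 2 := by ring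
  linarith [hbound, hfin]
end

section
/- Let T ≥ 1 be an integer, set ε := 1/(6·d·T³), let y, z ∈ C, and let β ≥ 1 be a real number. Suppose x ∈ C satisfies one of the following three conditions: (a) x = y and ⟨prox(x) − x, x − z⟩ ≥ 0; (b) x = z and ⟨prox(x) − x, y − x⟩ ≤ 0; (c) x = t·y + (1−t)·z for some t ∈ (0,1) and |⟨prox(x) − x, y − z⟩| ≤ 3ε·‖y − z‖₂². Then, with p := −L·(prox(x) − x), one has ⟨p, x − z⟩ ≤ (β − 1)·⟨p, y − x⟩ + D·L·β/T³. -/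
open scoped RealInnerProductSpace

set_option maxHeartbeats 1600000 in
/-- **Corollary 1**: the guarantee for the point returned by the BinarySearch
subroutine, with `β` playing the role of `η_k·L_k ≥ 1`. -/
theorem flag_binary_search_corollary
    {d : ℕ} (hd : 1 ≤ d) (C : Set (EuclideanSpace ℝ (Fin d)))
    (hCconv : Convex ℝ C) (hCclosed : IsClosed C)
    (L : ℝ) (hL : 0 < L)
    (f h : EuclideanSpace ℝ (Fin d) → ℝ)
    (f' : EuclideanSpace ℝ (Fin d) → EuclideanSpace ℝ (Fin d))
    (hfconv : ConvexOn ℝ Set.univ f) (hhconv : ConvexOn ℝ Set.univ h)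
    (hfdiff : ∀ x, HasGradientAt f (f' x) x)
    (hflip : ∀ x ∈ C, ∀ y ∈ C, ‖f' x - f' y‖ ≤ L * ‖x - y‖)
    (prox : EuclideanSpace ℝ (Fin d) → EuclideanSpace ℝ (Fin d))
    (hprox : ∀ x ∈ C, prox x ∈ C ∧ ∀ w ∈ C,
      h (prox x) + ⟪f' x, prox x - x⟫ + L / 2 * ‖prox x - x‖ ^ 2
        ≤ h w + ⟪f' x, w - x⟫ + L / 2 * ‖w - x‖ ^ 2)
    (D : ℝ) (hD0 : 0 ≤ D)
    (hD : ∀ a ∈ C, ∀ b ∈ C, ∀ i : Fin d, (a i - b i) ^ 2 ≤ D)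
    (T : ℕ) (hT : 1 ≤ T)
    (ε : ℝ) (hε : ε = 1 / (6 * (d : ℝ) * (T : ℝ) ^ 3))
    (y z x : EuclideanSpace ℝ (Fin d)) (hy : y ∈ C) (hz : z ∈ C) (hxC : x ∈ C)
    (β : ℝ) (hβ : 1 ≤ β)
    (hcases :
      (x = y ∧ 0 ≤ ⟪prox x - x, x - z⟫) ∨
      (x = z ∧ ⟪prox x - x, y - x⟫ ≤ 0) ∨
      (∃ t : ℝ, t ∈ Set.Ioo (0 : ℝ) 1 ∧ x = t • y + (1 - t) • z ∧
        |⟪prox x - x, y - z⟫| ≤ 3 * ε * ‖y - z‖ ^ 2))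
    (p : EuclideanSpace ℝ (Fin d)) (hp : p = -L • (prox x - x)) :
    ⟪p, x - z⟫ ≤ (β - 1) * ⟪p, y - x⟫ + D * L * β / (T : ℝ) ^ 3 := by
  have hu : (1 : ℝ) ≤ (T : ℝ) ^ 3 := one_le_pow₀ (by exact_mod_cast hT)
  have hu0 : (0 : ℝ) < (T : ℝ) ^ 3 := lt_of_lt_of_le one_pos hu
  have hd1 : (1 : ℝ) ≤ (d : ℝ) := by exact_mod_cast hd
  have hrest : 0 ≤ D * L * β / (T : ℝ) ^ 3 := by positivity
  subst hp
  rcases hcases with ⟨hxy, hpos⟩ | ⟨hxz, hneg⟩ | ⟨t, ht, hx, habs⟩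
  · subst hxy
    rw [real_inner_smul_left, real_inner_smul_left, sub_self, inner_zero_right,
      mul_zero, mul_zero, zero_add]
    nlinarith [hpos]
  · subst hxz
    rw [real_inner_smul_left, real_inner_smul_left, sub_self, inner_zero_right]
    nlinarith [hneg, mul_nonneg (mul_nonneg (sub_nonneg.2 hβ) hL.le) (neg_nonneg.2 hneg)]
  · obtain ⟨ht0, ht1⟩ := ht
    have hxz' : x - z = t • (y - z) := by rw [hx]; module
    have hyx' : y - x = (1 - t) • (y - z) := by rw [hx]; module
    set s : ℝ := ⟪prox x - x, y - z⟫ with hs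
    have ha : ‖y - z‖ ^ 2 ≤ (d : ℝ) * D := by
      rw [EuclideanSpace.norm_eq, Real.sq_sqrt (by positivity)]
      calc (∑ i, ‖(y - z) i‖ ^ 2) ≤ ∑ _i : Fin d, D := by
            refine Finset.sum_le_sum fun i _ => ?_
            have := hD y hy z hz i
            simpa [Real.norm_eq_abs, sq_abs] using this
        _ = (d : ℝ) * D := by simp [mul_comm]
    rw [hxz', hyx', real_inner_smul_left, real_inner_smul_left,
      real_inner_smul_right, real_inner_smul_right, ← hs]
    -- goal is now scalar
    have hsa : |s| ≤ 3 * ε * ‖y - z‖ ^ 2 := habs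
    have hε0 : 3 * ε = 1 / (2 * (d : ℝ) * (T : ℝ) ^ 3) := by
      rw [hε]; field_simp; ring
    have hsb : 2 * (d : ℝ) * (T : ℝ) ^ 3 * |s| ≤ ‖y - z‖ ^ 2 := by
      rw [hε0] at hsa
      have h2 : (0 : ℝ) < 2 * (d : ℝ) * (T : ℝ) ^ 3 := by positivity
      rw [div_mul_eq_mul_div, one_mul, le_div_iff₀ h2] at hsa
      linarith
    have hsc : 2 * (T : ℝ) ^ 3 * |s| ≤ D := by
      have hd0 : (0 : ℝ) < (d : ℝ) := lt_of_lt_of_le one_pos hd1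
      have : (d : ℝ) * (2 * (T : ℝ) ^ 3 * |s|) ≤ (d : ℝ) * D := by
        calc (d : ℝ) * (2 * (T : ℝ) ^ 3 * |s|)
            = 2 * (d : ℝ) * (T : ℝ) ^ 3 * |s| := by ring
          _ ≤ ‖y - z‖ ^ 2 := hsb
          _ ≤ (d : ℝ) * D := ha
      exact le_of_mul_le_mul_left this hd0
    have habs1 : s ≤ |s| := le_abs_self s
    have habs2 : -|s| ≤ s := neg_abs_le s
    have h0abs : 0 ≤ |s| := abs_nonneg s
    set u : ℝ := (T : ℝ) ^ 3 with hudef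
    set c : ℝ := (β - 1) * (1 - t) - t with hcdef
    have hs1 : 2 * u * s ≤ D := by
      calc 2 * u * s ≤ 2 * u * |s| := by
            nlinarith [mul_le_mul_of_nonneg_left habs1 (show (0:ℝ) ≤ 2 * u by positivity)]
        _ ≤ D := hsc
    have hs2 : -D ≤ 2 * u * s := by
      calc -D ≤ -(2 * u * |s|) := by linarith
        _ ≤ 2 * u * s := by
            nlinarith [mul_le_mul_of_nonneg_left habs2 (show (0:ℝ) ≤ 2 * u by positivity)]
    clear hsc hsb hsa habs ha hs hxz' hyx' hx hε hD hflip hfdiff hprox hfconv hhconv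
      hCconv hCclosed hT hd habs1 habs2 h0abs hrest hε0
    clear_value s u c
    have hc1 : c ≤ β := by nlinarith [mul_nonneg (sub_nonneg.2 hβ) ht0.le]
    have hc2 : -β ≤ c := by
      nlinarith [mul_nonneg (sub_nonneg.2 hβ) (sub_nonneg.2 ht1.le)]
    have key : (-L * (t * s) - (β - 1) * (-L * ((1 - t) * s))) * u ≤ D * L * β := by
      have e1 : 0 ≤ L * ((D - 2 * u * s) * (β + c)) :=
        mul_nonneg hL.le (mul_nonneg (by linarith) (by linarith))
      have e2 : 0 ≤ L * ((D + 2 * u * s) * (β - c)) :=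
        mul_nonneg hL.le (mul_nonneg (by linarith) (by linarith))
      have e3 : 0 ≤ L * (D * β) := mul_nonneg hL.le (mul_nonneg hD0 (by linarith))
      have key' : L * (s * (u * c)) ≤ D * (L * β) := by nlinarith [e1, e2, e3]
      calc (-L * (t * s) - (β - 1) * (-L * ((1 - t) * s))) * u
          = L * (s * (u * c)) := by rw [hcdef]; ring
        _ ≤ D * (L * β) := key'
        _ = D * L * β := by ring
    have := (le_div_iff₀ hu0).2 key
    linarith
end

section
/- Let p₁, …, p_T ∈ ℝ^d, η₁, …, η_T ∈ ℝ, and let s₁, …, s_T ∈ ℝ^d satisfy 0 < s₁(i) and s_{k−1}(i) ≤ s_k(i) for all coordinates i and all k = 2, …, T; set S_k := diag(s_k). Let z₁ ∈ C and, for k = 1, …, T, let z_{k+1} be the unique minimizer over z ∈ C of ⟨η_k·p_k, z − z_k⟩ + (1/2)·(z − z_k)ᵀ S_k (z − z_k). Then for every u ∈ C: Σ_{k=1}^T ⟨η_k·p_k, z_k − u⟩ ≤ Σ_{k=1}^T (η_k²/2)·p_kᵀ S_k⁻¹ p_k + (D/2)·Σ_{i=1}^d s_T(i). -/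
open Matrix

/-- **Mirror Descent Inequality** (Lemma 4), with `S_k = diag(s_k)` diagonal
positive definite with coordinatewise nondecreasing diagonals. -/
theorem flag_mirror_descent
    {d : ℕ} (C : Set (Fin d → ℝ)) (hCconv : Convex ℝ C) (hCclosed : IsClosed C)
    (D : ℝ) (hD0 : 0 ≤ D)
    (hD : ∀ a ∈ C, ∀ b ∈ C, ∀ i : Fin d, (a i - b i) ^ 2 ≤ D)
    (T : ℕ) (hT : 1 ≤ T)
    (p : ℕ → Fin d → ℝ) (η : ℕ → ℝ) (s : ℕ → Fin d → ℝ)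
    (hs_pos : ∀ i, 0 < s 1 i)
    (hs_mono : ∀ k, 2 ≤ k → k ≤ T → ∀ i, s (k - 1) i ≤ s k i)
    (z : ℕ → Fin d → ℝ) (hz1 : z 1 ∈ C)
    (hstep : ∀ k, 1 ≤ k → k ≤ T → z (k + 1) ∈ C ∧ ∀ w ∈ C,
      (η k • p k) ⬝ᵥ (z (k + 1) - z k)
          + 1 / 2 * ((z (k + 1) - z k) ⬝ᵥ (Matrix.diagonal (s k)).mulVec (z (k + 1) - z k))
        ≤ (η k • p k) ⬝ᵥ (w - z k)
          + 1 / 2 * ((w - z k) ⬝ᵥ (Matrix.diagonal (s k)).mulVec (w - z k)))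
    (u : Fin d → ℝ) (hu : u ∈ C) :
    ∑ k ∈ Finset.Icc 1 T, (η k • p k) ⬝ᵥ (z k - u)
      ≤ (∑ k ∈ Finset.Icc 1 T,
            η k ^ 2 / 2 * (p k ⬝ᵥ (Matrix.diagonal (s k))⁻¹.mulVec (p k)))
        + D / 2 * ∑ i : Fin d, s T i := by
  -- positivity of the diagonals up to time T
  have hspos : ∀ k, 1 ≤ k → k ≤ T → ∀ i, 0 < s k i := by
    intro k hk1
    induction k, hk1 using Nat.le_induction with
    | base => intro _ i; exact hs_pos i
    | succ n hn ih =>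
      intro hnT i
      have h1 : n ≤ T := le_trans (Nat.le_succ n) hnT
      have h2 := hs_mono (n + 1) (by omega) hnT i
      simp only [Nat.add_sub_cancel] at h2
      exact lt_of_lt_of_le (ih h1 i) h2
  -- membership of iterates
  have hzC : ∀ k, 1 ≤ k → k ≤ T + 1 → z k ∈ C := by
    intro k hk1
    induction k, hk1 using Nat.le_induction with
    | base => intro _; exact hz1
    | succ n hn ih =>
      intro hnT
      exact (hstep n hn (by omega)).1
  set A : ℕ → ℝ := fun k => ∑ i, s k i * (u i - z k i) ^ 2 with hA
  set B : ℕ → ℝ := fun k => ∑ i, s k i * (u i - z (k + 1) i) ^ 2 with hB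
  -- per-step inequality
  have step : ∀ k, 1 ≤ k → k ≤ T →
      (η k • p k) ⬝ᵥ (z k - u)
        ≤ (∑ i, (η k * p k i) ^ 2 / (2 * s k i)) + 1 / 2 * A k - 1 / 2 * B k := by
    intro k hk1 hkT
    obtain ⟨hbC, hmin⟩ := hstep k hk1 hkT
    set g : Fin d → ℝ := η k • p k with hg
    set a : Fin d → ℝ := z k with ha
    set b : Fin d → ℝ := z (k + 1) with hb
    set S : Fin d → ℝ := s k with hS
    have hSpos : ∀ i, 0 < S i := hspos k hk1 hkT
    set L : ℝ := g ⬝ᵥ (u - b) + ∑ i, S i * (b i - a i) * (u i - b i) with hL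
    set H : ℝ := 1 / 2 * ∑ i, S i * (u i - b i) ^ 2 with hH
    have hHnn : 0 ≤ H := by
      apply mul_nonneg (by norm_num)
      exact Finset.sum_nonneg fun i _ =>
        mul_nonneg (le_of_lt (hSpos i)) (sq_nonneg _)
    have key : ∀ t : ℝ, 0 < t → t ≤ 1 → 0 ≤ L + t * H := by
      intro t ht0 ht1
      set w : Fin d → ℝ := fun i => b i + t * (u i - b i) with hw
      have hwC : w ∈ C := by
        have : w = (1 - t) • b + t • u := by
          funext i; simp [hw]; ring
        rw [this]
        exact hCconv hbC hu (by linarith) (le_of_lt ht0) (by ring)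
      have hm := hmin w hwC
      have expand :
          (g ⬝ᵥ (w - a) + 1 / 2 * ((w - a) ⬝ᵥ (Matrix.diagonal S).mulVec (w - a)))
            - (g ⬝ᵥ (b - a) + 1 / 2 * ((b - a) ⬝ᵥ (Matrix.diagonal S).mulVec (b - a)))
          = t * L + t ^ 2 * H := by
        simp only [hL, hH, dotProduct, mulVec_diagonal, Pi.sub_apply, hw,
          Finset.mul_sum, mul_add, ← Finset.sum_add_distrib, ← Finset.sum_sub_distrib]
        exact Finset.sum_congr rfl fun i _ => by ring
      have h0 : 0 ≤ t * L + t ^ 2 * H := by rw [← expand]; linarith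
      nlinarith [h0, ht0]
    have hL0 : 0 ≤ L := by
      have hkey : ∀ ε > (0:ℝ), (0:ℝ) ≤ L + ε := by
        intro ε hε
        set t : ℝ := min 1 (ε / (H + 1)) with ht
        have ht0 : 0 < t := lt_min one_pos (div_pos hε (by linarith))
        have ht1 : t ≤ 1 := min_le_left _ _
        have h := key t ht0 ht1
        have htH : t * H ≤ ε := by
          have h1 : t ≤ ε / (H + 1) := min_le_right _ _
          have h2 := mul_le_mul_of_nonneg_right h1 hHnn
          calc t * H ≤ ε / (H + 1) * H := h2
            _ ≤ ε := by
                rw [div_mul_eq_mul_div, div_le_iff₀ (by linarith : (0:ℝ) < H + 1)]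
                nlinarith
        linarith
      exact le_of_forall_pos_le_add hkey
    have percoord : ∀ i ∈ Finset.univ, g i * (a i - u i) ≤
        ((η k * p k i) ^ 2 / (2 * S i) + 1 / 2 * (S i * (u i - a i) ^ 2)
          - 1 / 2 * (S i * (u i - b i) ^ 2))
          - (g i * (u i - b i) + S i * (b i - a i) * (u i - b i)) := by
      intro i _
      have hgi : g i = η k * p k i := by simp [hg]
      have hS0 : S i ≠ 0 := (hSpos i).ne'
      rw [← sub_nonneg, hgi]
      have hid : ((η k * p k i) ^ 2 / (2 * S i) + 1 / 2 * (S i * (u i - a i) ^ 2)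
          - 1 / 2 * (S i * (u i - b i) ^ 2))
          - ((η k * p k i) * (u i - b i) + S i * (b i - a i) * (u i - b i))
          - (η k * p k i) * (a i - u i)
          = (η k * p k i - S i * (a i - b i)) ^ 2 / (2 * S i) := by
        field_simp
        ring
      rw [hid]
      exact div_nonneg (sq_nonneg _) (by linarith [hSpos i])
    calc (η k • p k) ⬝ᵥ (z k - u) = ∑ i, g i * (a i - u i) := by
          simp [dotProduct, hg, ha]
      _ ≤ ∑ i, (((η k * p k i) ^ 2 / (2 * S i) + 1 / 2 * (S i * (u i - a i) ^ 2)
          - 1 / 2 * (S i * (u i - b i) ^ 2))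
          - (g i * (u i - b i) + S i * (b i - a i) * (u i - b i))) :=
          Finset.sum_le_sum percoord
      _ = (∑ i, (η k * p k i) ^ 2 / (2 * S i)) + 1 / 2 * A k - 1 / 2 * B k - L := by
          simp only [hA, hB, hL, dotProduct, Finset.mul_sum, Pi.sub_apply,
            ← Finset.sum_add_distrib, ← Finset.sum_sub_distrib]
          rfl
      _ ≤ (∑ i, (η k * p k i) ^ 2 / (2 * S i)) + 1 / 2 * A k - 1 / 2 * B k := by
          linarith
  -- telescoping bound
  have tel : ∀ N, 1 ≤ N → N ≤ T →
      ∑ k ∈ Finset.Icc 1 N, (A k - B k) ≤ D * ∑ i, s N i - B N := by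
    intro N hN1
    induction N, hN1 using Nat.le_induction with
    | base =>
      intro _
      rw [Finset.Icc_self, Finset.sum_singleton]
      have hA1 : A 1 ≤ D * ∑ i, s 1 i := by
        rw [Finset.mul_sum]
        apply Finset.sum_le_sum
        intro i _
        have h1 := hD u hu (z 1) hz1 i
        have h2 := (hs_pos i).le
        calc s 1 i * (u i - z 1 i) ^ 2 ≤ s 1 i * D :=
              mul_le_mul_of_nonneg_left h1 h2
          _ = D * s 1 i := mul_comm _ _
      linarith
    | succ n hn ih =>
      intro hnT
      have hn' : n ≤ T := by omega
      rw [Finset.sum_Icc_succ_top (by omega : 1 ≤ n + 1)]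
      have hmono : ∀ i, s n i ≤ s (n + 1) i := by
        intro i
        have := hs_mono (n + 1) (by omega) hnT i
        simpa using this
      have hzn1 : z (n + 1) ∈ C := hzC (n + 1) (by omega) (by omega)
      have hdiff : A (n + 1) - B n ≤ D * ∑ i, s (n + 1) i - D * ∑ i, s n i := by
        have heq : A (n + 1) - B n = ∑ i, (s (n + 1) i - s n i) * (u i - z (n + 1) i) ^ 2 := by
          simp only [hA, hB, ← Finset.sum_sub_distrib]
          exact Finset.sum_congr rfl fun i _ => by ring
        rw [heq, Finset.mul_sum, Finset.mul_sum, ← Finset.sum_sub_distrib]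
        apply Finset.sum_le_sum
        intro i _
        have h1 := hD u hu (z (n + 1)) hzn1 i
        have h2 : 0 ≤ s (n + 1) i - s n i := by linarith [hmono i]
        nlinarith
      linarith [ih hn']
  have hBT : 0 ≤ B T :=
    Finset.sum_nonneg fun i _ => mul_nonneg (hspos T hT le_rfl i).le (sq_nonneg _)
  have htel : ∑ k ∈ Finset.Icc 1 T, (A k - B k) ≤ D * ∑ i, s T i := by
    linarith [tel T hT le_rfl]
  have hterm : ∀ k ∈ Finset.Icc 1 T,
      η k ^ 2 / 2 * (p k ⬝ᵥ (Matrix.diagonal (s k))⁻¹.mulVec (p k))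
        = ∑ i, (η k * p k i) ^ 2 / (2 * s k i) := by
    intro k hk
    rw [Finset.mem_Icc] at hk
    have hne : ∀ i, s k i ≠ 0 := fun i => (hspos k hk.1 hk.2 i).ne'
    have hinv : (Matrix.diagonal (s k))⁻¹ = Matrix.diagonal fun i => (s k i)⁻¹ := by
      apply Matrix.inv_eq_right_inv
      rw [Matrix.diagonal_mul_diagonal,
        show (fun i => s k i * (s k i)⁻¹) = fun _ => (1 : ℝ) from
          funext fun i => mul_inv_cancel₀ (hne i)]
      exact Matrix.diagonal_one
    rw [hinv]
    simp only [dotProduct, mulVec_diagonal, Finset.mul_sum]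
    refine Finset.sum_congr rfl fun i _ => ?_
    field_simp
  have heq : (∑ k ∈ Finset.Icc 1 T,
      η k ^ 2 / 2 * (p k ⬝ᵥ (Matrix.diagonal (s k))⁻¹.mulVec (p k)))
      = ∑ k ∈ Finset.Icc 1 T, ∑ i, (η k * p k i) ^ 2 / (2 * s k i) :=
    Finset.sum_congr rfl hterm
  rw [heq]
  calc ∑ k ∈ Finset.Icc 1 T, (η k • p k) ⬝ᵥ (z k - u)
      ≤ ∑ k ∈ Finset.Icc 1 T,
          ((∑ i, (η k * p k i) ^ 2 / (2 * s k i)) + 1 / 2 * A k - 1 / 2 * B k) := by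
        apply Finset.sum_le_sum
        intro k hk
        rw [Finset.mem_Icc] at hk
        exact step k hk.1 hk.2
    _ = (∑ k ∈ Finset.Icc 1 T, ∑ i, (η k * p k i) ^ 2 / (2 * s k i))
          + 1 / 2 * ∑ k ∈ Finset.Icc 1 T, (A k - B k) := by
        rw [Finset.mul_sum, ← Finset.sum_add_distrib]
        exact Finset.sum_congr rfl fun k _ => by ring
    _ ≤ (∑ k ∈ Finset.Icc 1 T, ∑ i, (η k * p k i) ^ 2 / (2 * s k i))
          + D / 2 * ∑ i, s T i := by
        linarith
end

section
/- Let a₁, …, a_T be real numbers and set b_k := √(a₁² + ⋯ + a_k²) for k = 1, …, T. Then Σ_{k=1}^T c_k ≤ 2·b_T, where c_k := a_k²/b_k when b_k > 0 and c_k := 0 when b_k = 0. -/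
/-- The scalar AdaGrad inequality (from Lemma 4 of Duchi–Hazan–Singer):
with `b_k = √(a₁² + ⋯ + a_k²)`, `∑_{k=1}^T a_k²/b_k ≤ 2 b_T`
(with the convention `a_k²/b_k := 0` when `b_k = 0`). -/
theorem adagrad_scalar_inequality
    (T : ℕ) (a : ℕ → ℝ) (b : ℕ → ℝ)
    (hb : ∀ k, b k = Real.sqrt (∑ j ∈ Finset.Icc 1 k, a j ^ 2)) :
    ∑ k ∈ Finset.Icc 1 T, (if b k = 0 then 0 else a k ^ 2 / b k) ≤ 2 * b T := by
  have hs : ∀ k, (0:ℝ) ≤ ∑ j ∈ Finset.Icc 1 k, a j ^ 2 := fun k =>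
    Finset.sum_nonneg fun j _ => sq_nonneg _
  have hbsq : ∀ k, b k ^ 2 = ∑ j ∈ Finset.Icc 1 k, a j ^ 2 := fun k => by
    rw [hb k, Real.sq_sqrt (hs k)]
  have hbnn : ∀ k, 0 ≤ b k := fun k => (hb k) ▸ Real.sqrt_nonneg _
  induction T with
  | zero => simp [hb 0]
  | succ T ih =>
    rw [Finset.sum_Icc_succ_top (Nat.one_le_iff_ne_zero.mpr (Nat.succ_ne_zero T))]
    have hstep : b (T+1) ^ 2 = b T ^ 2 + a (T+1) ^ 2 := by
      rw [hbsq, hbsq, Finset.sum_Icc_succ_top (Nat.one_le_iff_ne_zero.mpr (Nat.succ_ne_zero T))]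
    have key : (if b (T+1) = 0 then (0:ℝ) else a (T+1) ^ 2 / b (T+1))
        ≤ 2 * b (T+1) - 2 * b T := by
      by_cases h : b (T+1) = 0
      · have hbt : b T = 0 := by
          nlinarith [hbnn T, hstep, sq_nonneg (a (T+1))]
        simp [h, hbt]
      · rw [if_neg h]
        have hpos : 0 < b (T+1) := lt_of_le_of_ne (hbnn _) (Ne.symm h)
        rw [div_le_iff₀ hpos]
        nlinarith [hbnn T, hstep, hpos]
    linarith
end

section
/- Let g₁, …, g_T ∈ ℝ^d, let δ > 0, and define s_k(i) := √(Σ_{j=1}^k g_j(i)²) for k = 1, …, T and i = 1, …, d, and q_T := Σ_{i=1}^d s_T(i). Then Σ_{k=1}^T Σ_{i=1}^d g_k(i)²/(s_k(i) + δ) ≤ 2·q_T. Equivalently, with S_k := diag(s_k) + δI, Σ_{k=1}^T g_kᵀ S_k⁻¹ g_k ≤ 2·q_T. -/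
lemma adagrad_aux (δ : ℝ) (hδ : 0 < δ) (a : ℕ → ℝ) (s : ℕ → ℝ)
    (hs : ∀ k, s k = Real.sqrt (∑ j ∈ Finset.Icc 1 k, a j ^ 2)) :
    ∀ n, ∑ k ∈ Finset.Icc 1 n, a k ^ 2 / (s k + δ) ≤ 2 * s n := by
  have hsnn : ∀ k, 0 ≤ s k := fun k => (hs k) ▸ Real.sqrt_nonneg _
  have hsq : ∀ k, s k ^ 2 = ∑ j ∈ Finset.Icc 1 k, a j ^ 2 := by
    intro k
    rw [hs k, Real.sq_sqrt (Finset.sum_nonneg fun j _ => sq_nonneg _)]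
  intro n
  induction n with
  | zero => simp [hs 0]
  | succ n ih =>
    rw [Finset.sum_Icc_succ_top (Nat.succ_le_succ (Nat.zero_le n))]
    have hmono : s n ≤ s (n + 1) := by
      rw [hs n, hs (n+1)]
      exact Real.sqrt_le_sqrt (Finset.sum_le_sum_of_subset_of_nonneg
        (Finset.Icc_subset_Icc_right (Nat.le_succ n)) (fun j _ _ => sq_nonneg _))
    have hdiff : a (n+1) ^ 2 = s (n+1) ^ 2 - s n ^ 2 := by
      rw [hsq, hsq, Finset.sum_Icc_succ_top (Nat.succ_le_succ (Nat.zero_le n))]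
      ring
    have hterm : a (n+1) ^ 2 / (s (n+1) + δ) ≤ 2 * (s (n+1) - s n) := by
      rw [div_le_iff₀ (by linarith [hsnn (n+1)])]
      have : s (n+1) ^ 2 - s n ^ 2 = (s (n+1) - s n) * (s (n+1) + s n) := by ring
      rw [hdiff, this]
      have h1 : 0 ≤ s (n+1) - s n := by linarith
      have h2 : s (n+1) + s n ≤ 2 * (s (n+1) + δ) := by
        have := hsnn n; linarith
      calc (s (n+1) - s n) * (s (n+1) + s n)
          ≤ (s (n+1) - s n) * (2 * (s (n+1) + δ)) := by
            apply mul_le_mul_of_nonneg_left h2 h1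
        _ = 2 * (s (n+1) - s n) * (s (n+1) + δ) := by ring
    linarith
/-- **AdaGrad Inequalities** (Lemma 5, part (i)): with
`s_k(i) = √(∑_{j=1}^k g_j(i)²)` and `q_T = ∑_i s_T(i)`, one has
`∑_{k=1}^T ∑_i g_k(i)²/(s_k(i) + δ) ≤ 2 q_T`, i.e.
`∑_{k=1}^T g_kᵀ S_k⁻¹ g_k ≤ 2 q_T` for `S_k = diag(s_k) + δ I`. -/
theorem adagrad_inequality_i
    (T d : ℕ) (g : ℕ → Fin d → ℝ) (δ : ℝ) (hδ : 0 < δ)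
    (s : ℕ → Fin d → ℝ)
    (hs : ∀ k, ∀ i, s k i = Real.sqrt (∑ j ∈ Finset.Icc 1 k, g j i ^ 2))
    (q : ℝ) (hq : q = ∑ i : Fin d, s T i) :
    ∑ k ∈ Finset.Icc 1 T, ∑ i : Fin d, g k i ^ 2 / (s k i + δ) ≤ 2 * q := by
  rw [Finset.sum_comm, hq, Finset.mul_sum]
  exact Finset.sum_le_sum fun i _ =>
    adagrad_aux δ hδ (fun k => g k i) (fun k => s k i) (fun k => hs k i) T
end

section
/- Let g₁, …, g_T ∈ ℝ^d and define q_T := Σ_{i=1}^d √(Σ_{k=1}^T g_k(i)²). For every s ∈ ℝ^d with s(i) > 0 for all i and Σ_{i=1}^d s(i) ≤ 1, one has Σ_{k=1}^T Σ_{i=1}^d g_k(i)²/s(i) ≥ q_T². Moreover, if for every coordinate i there exists k with g_k(i) ≠ 0 (so q_T > 0 and each √(Σ_k g_k(i)²) > 0), then the choice s(i) := √(Σ_{k=1}^T g_k(i)²)/q_T is admissible and attains equality, i.e., q_T² = min over all such s of Σ_{k=1}^T Σ_{i=1}^d g_k(i)²/s(i). -/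
/-- **AdaGrad Inequalities** (Lemma 5, part (ii)): with
`q_T = ∑_i √(∑_{k=1}^T g_k(i)²)`, every positive `s` with `∑_i s(i) ≤ 1`
satisfies `∑_{k=1}^T ∑_i g_k(i)²/s(i) ≥ q_T²`; and under nondegeneracy the
choice `s(i) = √(∑_k g_k(i)²)/q_T` is admissible and attains equality, so
`q_T² = min_{S ∈ 𝒮} ∑_k g_kᵀ S⁻¹ g_k`. -/
theorem adagrad_inequality_ii
    (T d : ℕ) (g : ℕ → Fin d → ℝ)
    (q : ℝ) (hq : q = ∑ i : Fin d, Real.sqrt (∑ k ∈ Finset.Icc 1 T, g k i ^ 2)) :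
    (∀ s : Fin d → ℝ, (∀ i, 0 < s i) → (∑ i : Fin d, s i) ≤ 1 →
      q ^ 2 ≤ ∑ k ∈ Finset.Icc 1 T, ∑ i : Fin d, g k i ^ 2 / s i) ∧
    ((∀ i : Fin d, ∃ k ∈ Finset.Icc 1 T, g k i ≠ 0) →
      ∃ s : Fin d → ℝ,
        (∀ i, s i = Real.sqrt (∑ k ∈ Finset.Icc 1 T, g k i ^ 2) / q) ∧
        (∀ i, 0 < s i) ∧ (∑ i : Fin d, s i) ≤ 1 ∧
        ∑ k ∈ Finset.Icc 1 T, ∑ i : Fin d, g k i ^ 2 / s i = q ^ 2) := by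
  set a : Fin d → ℝ := fun i => ∑ k ∈ Finset.Icc 1 T, g k i ^ 2 with ha
  have ha0 : ∀ i, 0 ≤ a i := fun i => Finset.sum_nonneg fun k _ => sq_nonneg _
  have hswap : ∀ s : Fin d → ℝ,
      (∑ k ∈ Finset.Icc 1 T, ∑ i : Fin d, g k i ^ 2 / s i)
        = ∑ i : Fin d, a i / s i := by
    intro s
    rw [Finset.sum_comm]
    exact Finset.sum_congr rfl fun i _ => (Finset.sum_div _ _ _).symm
  constructor
  · intro s hs hsum
    rw [hswap]
    have heq : ∀ i : Fin d, Real.sqrt (a i / s i) * Real.sqrt (s i)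
        = Real.sqrt (a i) := by
      intro i
      rw [← Real.sqrt_mul (div_nonneg (ha0 i) (hs i).le), div_mul_cancel₀ _ (hs i).ne']
    have hcs := Finset.sum_mul_sq_le_sq_mul_sq Finset.univ
      (fun i : Fin d => Real.sqrt (a i / s i)) (fun i => Real.sqrt (s i))
    have e1 : ∑ i : Fin d, Real.sqrt (a i / s i) * Real.sqrt (s i)
        = ∑ i : Fin d, Real.sqrt (a i) := Finset.sum_congr rfl fun i _ => heq i
    have e2 : ∑ i : Fin d, (Real.sqrt (a i / s i)) ^ 2 = ∑ i : Fin d, a i / s i :=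
      Finset.sum_congr rfl fun i _ => Real.sq_sqrt (div_nonneg (ha0 i) (hs i).le)
    have e3 : ∑ i : Fin d, (Real.sqrt (s i)) ^ 2 = ∑ i : Fin d, s i :=
      Finset.sum_congr rfl fun i _ => Real.sq_sqrt (hs i).le
    rw [e1, e2, e3] at hcs
    have hpos : 0 ≤ ∑ i : Fin d, a i / s i :=
      Finset.sum_nonneg fun i _ => div_nonneg (ha0 i) (hs i).le
    calc q ^ 2 ≤ (∑ i : Fin d, a i / s i) * (∑ i : Fin d, s i) := by rw [hq]; exact hcs
      _ ≤ (∑ i : Fin d, a i / s i) * 1 := mul_le_mul_of_nonneg_left hsum hpos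
      _ = _ := mul_one _
  · intro hnd
    have hapos : ∀ i, 0 < a i := by
      intro i
      obtain ⟨k, hk, hgk⟩ := hnd i
      exact Finset.sum_pos' (fun j _ => sq_nonneg _) ⟨k, hk, by positivity⟩
    refine ⟨fun i => Real.sqrt (a i) / q, fun i => rfl, ?_, ?_, ?_⟩
    · intro i
      have hqpos : 0 < q := by
        rw [hq]
        exact Finset.sum_pos' (fun j _ => Real.sqrt_nonneg _)
          ⟨i, Finset.mem_univ i, Real.sqrt_pos.mpr (hapos i)⟩
      exact div_pos (Real.sqrt_pos.mpr (hapos i)) hqpos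
    · rw [← Finset.sum_div, ← hq]
      by_cases hd : d = 0
      · subst hd; simp [hq]
      · have hqpos : 0 < q := by
          rw [hq]
          obtain ⟨i⟩ := Fin.pos_iff_nonempty.mp (Nat.pos_of_ne_zero hd)
          exact Finset.sum_pos' (fun j _ => Real.sqrt_nonneg _)
            ⟨i, Finset.mem_univ i, Real.sqrt_pos.mpr (hapos i)⟩
        rw [div_self hqpos.ne']
    · rw [hswap]
      have hdiv : ∀ i : Fin d, a i / (Real.sqrt (a i) / q) = Real.sqrt (a i) * q := by
        intro i
        rw [div_div_eq_mul_div, mul_comm, mul_div_assoc, Real.div_sqrt, mul_comm]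
      simp only [hdiv, ← Finset.sum_mul, ← hq, sq]
      exact congrArg (fun x => x * q) hq.symm
end

section
/- Let L₁, …, L_T be positive reals and define η₁ := 1/L₁ and, for k = 2, …, T, η_k := 1/(2L_k) + √(1/(4L_k²) + η_{k−1}²·L_{k−1}/L_k). Then Σ_{k=1}^T η_k ≥ T³/(1000·Σ_{k=1}^T L_k). -/
set_option maxHeartbeats 1000000 in
/-- Stepsize-sum lower bound (Lemma 7):
`∑_{k=1}^T η_k ≥ T³ / (1000 ∑_{k=1}^T L_k)`. -/
theorem flag_stepsize_sum_lower_bound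
    (T : ℕ) (hT : 1 ≤ T) (L η : ℕ → ℝ)
    (hL : ∀ k, 1 ≤ k → k ≤ T → 0 < L k)
    (hη1 : η 1 = 1 / L 1)
    (hηk : ∀ k, 2 ≤ k → k ≤ T →
      η k = 1 / (2 * L k)
        + Real.sqrt (1 / (4 * L k ^ 2) + η (k - 1) ^ 2 * L (k - 1) / L k)) :
    (T : ℝ) ^ 3 / (1000 * ∑ k ∈ Finset.Icc 1 T, L k)
      ≤ ∑ k ∈ Finset.Icc 1 T, η k := by
  set S : ℕ → ℝ := fun k => ∑ j ∈ Finset.Icc 1 k, η j with hSdef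
  -- positivity of η
  have hηpos : ∀ k, 1 ≤ k → k ≤ T → 0 < η k := by
    intro k hk1 hkT
    rcases eq_or_lt_of_le hk1 with h | h
    · rw [← h] at hkT ⊢
      rw [hη1]
      exact one_div_pos.mpr (hL 1 le_rfl hkT)
    · rw [hηk k h hkT]
      have hLk := hL k hk1 hkT
      have hs := Real.sqrt_nonneg (1 / (4 * L k ^ 2) + η (k - 1) ^ 2 * L (k - 1) / L k)
      have : 0 < 1 / (2 * L k) := by positivity
      linarith
  -- key identity : η k ^ 2 * L k = S k
  have hid : ∀ k, 1 ≤ k → k ≤ T → η k ^ 2 * L k = S k := by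
    intro k hk1
    induction k, hk1 using Nat.le_induction with
    | base =>
      intro h1T
      have hL1 := hL 1 le_rfl h1T
      simp only [hSdef, Finset.Icc_self, Finset.sum_singleton, hη1]
      field_simp
    | succ n hn IH =>
      intro hsT
      have hnT : n ≤ T := le_trans (Nat.le_succ n) hsT
      have hLn := hL n hn hnT
      have hLs := hL (n + 1) (by omega) hsT
      have heq := hηk (n + 1) (by omega) hsT
      simp only [Nat.add_sub_cancel] at heq
      have ha2 : 1 / (4 * L (n + 1) ^ 2) = (1 / (2 * L (n + 1))) ^ 2 := by
        field_simp
        ring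
      have hb : 0 ≤ η n ^ 2 * L n / L (n + 1) := by positivity
      have hs : Real.sqrt ((1 / (2 * L (n + 1))) ^ 2 + η n ^ 2 * L n / L (n + 1)) ^ 2
          = (1 / (2 * L (n + 1))) ^ 2 + η n ^ 2 * L n / L (n + 1) :=
        Real.sq_sqrt (by positivity)
      rw [ha2] at heq
      have key : η (n + 1) ^ 2 = 2 * (1 / (2 * L (n + 1))) * η (n + 1)
          + η n ^ 2 * L n / L (n + 1) := by
        rw [heq]; nlinarith [hs]
      have hSsucc : S (n + 1) = S n + η (n + 1) := by
        simp only [hSdef]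
        rw [Finset.sum_Icc_succ_top (by omega : 1 ≤ n + 1)]
      rw [hSsucc, ← IH hnT]
      rw [key]
      field_simp
      ring
  -- S positivity
  have hSpos : ∀ k, 1 ≤ k → k ≤ T → 0 < S k := by
    intro k hk1 hkT
    apply Finset.sum_pos
    · intro j hj
      rw [Finset.mem_Icc] at hj
      exact hηpos j hj.1 (le_trans hj.2 hkT)
    · exact ⟨1, Finset.mem_Icc.mpr ⟨le_rfl, hk1⟩⟩
  have hSnn : ∀ k, k ≤ T → 0 ≤ S k := by
    intro k hkT
    rcases Nat.eq_zero_or_pos k with h | h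
    · simp [hSdef, h]
    · exact (hSpos k h hkT).le
  -- per-step lower bound on increments of sqrt (S ·)
  have hstep : ∀ i, i < T →
      1 / (2 * Real.sqrt (L (i + 1))) ≤ Real.sqrt (S (i + 1)) - Real.sqrt (S i) := by
    intro i hi
    have hiT : i + 1 ≤ T := hi
    have hLp := hL (i + 1) (by omega) hiT
    have hSp := hSpos (i + 1) (by omega) hiT
    have hSin : 0 ≤ S i := hSnn i (by omega)
    have hrel : S (i + 1) = S i + η (i + 1) := by
      simp only [hSdef]
      rw [Finset.sum_Icc_succ_top (by omega : 1 ≤ i + 1)]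
    have hη : η (i + 1) = Real.sqrt (S (i + 1)) / Real.sqrt (L (i + 1)) := by
      have h := hid (i + 1) (by omega) hiT
      have : Real.sqrt (S (i + 1)) = η (i + 1) * Real.sqrt (L (i + 1)) := by
        rw [← h, Real.sqrt_mul (sq_nonneg _),
          Real.sqrt_sq (hηpos (i + 1) (by omega) hiT).le]
      rw [this]
      field_simp [Real.sqrt_ne_zero'.mpr hLp]
    set u := Real.sqrt (S (i + 1)) with hu'
    set v := Real.sqrt (S i) with hv'
    set w := Real.sqrt (L (i + 1)) with hw'
    have hw : 0 < w := Real.sqrt_pos.mpr hLp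
    have hu : 0 < u := Real.sqrt_pos.mpr hSp
    have hv0 : 0 ≤ v := Real.sqrt_nonneg _
    have hu2 : u ^ 2 = S (i + 1) := Real.sq_sqrt hSp.le
    have hv2 : v ^ 2 = S i := Real.sq_sqrt hSin
    have hvu : v ≤ u := Real.sqrt_le_sqrt (by nlinarith [hηpos (i + 1) (by omega : 1 ≤ i + 1) hiT])
    have hmain : (u ^ 2 - v ^ 2) * w = u := by
      rw [hu2, hv2, hrel, hη]
      field_simp
      ring
    rw [div_le_iff₀ (by positivity)]
    nlinarith [mul_nonneg (mul_nonneg hw.le (sub_nonneg.mpr hvu)) (sub_nonneg.mpr hvu),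
      mul_pos hu hw]
  -- telescoping
  have htel : ∑ i ∈ Finset.range T, (Real.sqrt (S (i + 1)) - Real.sqrt (S i))
      = Real.sqrt (S T) := by
    rw [Finset.sum_range_sub (fun i => Real.sqrt (S i))]
    simp [hSdef]
  set B := ∑ i ∈ Finset.range T, 1 / Real.sqrt (L (i + 1)) with hBdef
  have hB2 : B / 2 ≤ Real.sqrt (S T) := by
    rw [← htel]
    have : B / 2 = ∑ i ∈ Finset.range T, 1 / (2 * Real.sqrt (L (i + 1))) := by
      rw [hBdef, Finset.sum_div]
      apply Finset.sum_congr rfl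
      intro i _
      rw [div_div]
      ring_nf
    rw [this]
    exact Finset.sum_le_sum fun i hi => hstep i (Finset.mem_range.mp hi)
  set A := ∑ i ∈ Finset.range T, Real.sqrt (L (i + 1)) with hAdef
  set Λ := ∑ k ∈ Finset.Icc 1 T, L k with hΛdef
  have hΛ : Λ = ∑ i ∈ Finset.range T, L (i + 1) := by
    rw [hΛdef, ← Finset.Ico_add_one_right_eq_Icc, Finset.sum_Ico_eq_sum_range]
    simp [add_comm]
  have hΛpos : 0 < Λ := by
    rw [hΛ]
    apply Finset.sum_pos
    · intro i hi
      exact hL (i + 1) (by omega) (Finset.mem_range.mp hi)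
    · exact ⟨0, Finset.mem_range.mpr (by omega)⟩
  -- Cauchy-Schwarz 1 : T² ≤ A * B
  have hCS1 : (T : ℝ) ^ 2 ≤ A * B := by
    have hcs := Finset.sum_mul_sq_le_sq_mul_sq (Finset.range T)
      (fun i => Real.sqrt (Real.sqrt (L (i + 1))))
      (fun i => 1 / Real.sqrt (Real.sqrt (L (i + 1))))
    have hL4 : ∀ i ∈ Finset.range T, 0 < Real.sqrt (Real.sqrt (L (i + 1))) := by
      intro i hi
      exact Real.sqrt_pos.mpr (Real.sqrt_pos.mpr (hL (i + 1) (by omega)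
        (Finset.mem_range.mp hi)))
    have e1 : ∑ i ∈ Finset.range T,
        Real.sqrt (Real.sqrt (L (i + 1))) * (1 / Real.sqrt (Real.sqrt (L (i + 1)))) = T := by
      have he : ∀ i ∈ Finset.range T,
          Real.sqrt (Real.sqrt (L (i + 1))) * (1 / Real.sqrt (Real.sqrt (L (i + 1)))) = 1 := by
        intro i hi
        rw [mul_one_div, div_self (hL4 i hi).ne']
      rw [Finset.sum_congr rfl he]
      simp
    have e2 : ∑ i ∈ Finset.range T, Real.sqrt (Real.sqrt (L (i + 1))) ^ 2 = A := by
      rw [hAdef]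
      exact Finset.sum_congr rfl fun i hi => Real.sq_sqrt (Real.sqrt_nonneg _)
    have e3 : ∑ i ∈ Finset.range T, (1 / Real.sqrt (Real.sqrt (L (i + 1)))) ^ 2 = B := by
      rw [hBdef]
      refine Finset.sum_congr rfl fun i hi => ?_
      rw [div_pow, one_pow, Real.sq_sqrt (Real.sqrt_nonneg _)]
    rw [e1, e2, e3] at hcs
    exact hcs
  -- Cauchy-Schwarz 2 : A² ≤ T * Λ
  have hCS2 : A ^ 2 ≤ T * Λ := by
    have hcs := Finset.sum_mul_sq_le_sq_mul_sq (Finset.range T)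
      (fun _ => (1 : ℝ)) (fun i => Real.sqrt (L (i + 1)))
    have e1 : ∑ i ∈ Finset.range T, (1 : ℝ) * Real.sqrt (L (i + 1)) = A := by
      rw [hAdef]; exact Finset.sum_congr rfl fun i _ => one_mul _
    have e2 : ∑ i ∈ Finset.range T, (1 : ℝ) ^ 2 = (T : ℝ) := by simp
    have e3 : ∑ i ∈ Finset.range T, Real.sqrt (L (i + 1)) ^ 2 = Λ := by
      rw [hΛ]
      exact Finset.sum_congr rfl fun i hi =>
        Real.sq_sqrt (hL (i + 1) (by omega) (Finset.mem_range.mp hi)).le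
    rw [e1, e2, e3] at hcs
    exact hcs
  -- combine
  have hBnn : 0 ≤ B := by
    apply Finset.sum_nonneg
    intro i _
    positivity
  have hAnn : 0 ≤ A := by
    apply Finset.sum_nonneg
    intro i _
    exact Real.sqrt_nonneg _
  have hST : B ^ 2 / 4 ≤ S T := by
    have h1 := mul_self_le_mul_self (by positivity : (0:ℝ) ≤ B / 2) hB2
    have h2 : Real.sqrt (S T) * Real.sqrt (S T) = S T :=
      Real.mul_self_sqrt (hSnn T le_rfl)
    nlinarith
  have hTpos : (0 : ℝ) < T := by exact_mod_cast hT
  have hcube : (T : ℝ) ^ 3 ≤ Λ * B ^ 2 := by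
    have h4 : (T : ℝ) ^ 4 ≤ A ^ 2 * B ^ 2 := by nlinarith
    have h5 : A ^ 2 * B ^ 2 ≤ T * Λ * B ^ 2 :=
      mul_le_mul_of_nonneg_right hCS2 (sq_nonneg B)
    nlinarith
  rw [div_le_iff₀ (by positivity)]
  nlinarith [mul_le_mul_of_nonneg_right hST (by positivity : (0:ℝ) ≤ 1000 * Λ)]
end

section
/- In the FLAG setting, for every u ∈ C: Σ_{k=1}^T [ (η_{k−1}²·L_{k−1} − η_k²·L_k + η_k)·F(y_k) − η_k·F(u) ] + η_T²·L_T·F(y_{T+1}) ≤ Σ_{k=1}^T D·L·η_k²·L_k/T³ + (D/2)·(Σ_{i=1}^d s_T(i) + δ·d), where η₀²·L₀ is interpreted as 0. -/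
set_option maxHeartbeats 1000000


open scoped RealInnerProductSpace

section FlagAux

lemma flag_inner_euclid {d : ℕ} (a b : EuclideanSpace ℝ (Fin d)) :
    ⟪a, b⟫ = ∑ i, a i * b i := by
  simp [PiLp.inner_apply, RCLike.inner_apply, conj_trivial]
  exact Finset.sum_congr rfl fun i _ => mul_comm _ _

lemma flag_norm_sq_euclid {d : ℕ} (a : EuclideanSpace ℝ (Fin d)) :
    ‖a‖^2 = ∑ i, (a i)^2 := by
  rw [EuclideanSpace.norm_eq, Real.sq_sqrt (by positivity)]
  simp [sq_abs]

lemma flag_convexOn_inner_sub {d : ℕ} (a x0 : EuclideanSpace ℝ (Fin d)) :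
    ConvexOn ℝ Set.univ (fun v => ⟪a, v - x0⟫) := by
  refine ⟨convex_univ, fun p _ q _ s t hs ht hst => ?_⟩
  simp only [inner_sub_right, inner_add_right, inner_smul_right, smul_eq_mul]
  have : (⟪a, x0⟫ : ℝ) = s * ⟪a, x0⟫ + t * ⟪a, x0⟫ := by
    rw [← add_mul, hst, one_mul]
  linarith [this]

lemma flag_strong_min {d : ℕ} {C : Set (EuclideanSpace ℝ (Fin d))} (hC : Convex ℝ C)
    (c : EuclideanSpace ℝ (Fin d) → ℝ) (hc : ConvexOn ℝ Set.univ c)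
    (W : Fin d → ℝ) (hW : ∀ i, 0 ≤ W i) (b m v : EuclideanSpace ℝ (Fin d))
    (hm : m ∈ C) (hv : v ∈ C)
    (hmin : ∀ w ∈ C, c m + (1:ℝ)/2 * ∑ i, W i * (m i - b i)^2
      ≤ c w + (1:ℝ)/2 * ∑ i, W i * (w i - b i)^2) :
    c m + (1:ℝ)/2 * ∑ i, W i * (m i - b i)^2 + (1:ℝ)/2 * ∑ i, W i * (v i - m i)^2
      ≤ c v + (1:ℝ)/2 * ∑ i, W i * (v i - b i)^2 := by
  set X : ℝ := (1:ℝ)/2 * ∑ i, W i * (v i - m i)^2 with hXdef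
  have hX : 0 ≤ X := by
    have : (0:ℝ) ≤ ∑ i, W i * (v i - m i)^2 :=
      Finset.sum_nonneg fun i _ => mul_nonneg (hW i) (sq_nonneg _)
    linarith
  have hkey : ∀ t : ℝ, 0 < t → t ≤ 1 →
      c m + (1:ℝ)/2 * ∑ i, W i * (m i - b i)^2 + (1 - t) * X
        ≤ c v + (1:ℝ)/2 * ∑ i, W i * (v i - b i)^2 := by
    intro t ht0 ht1
    set vt : EuclideanSpace ℝ (Fin d) := (1 - t) • m + t • v with hvt
    have hvtC : vt ∈ C := hC hm hv (by linarith) (le_of_lt ht0) (by ring)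
    have hcvt : c vt ≤ (1 - t) * c m + t * c v :=
      hc.2 (Set.mem_univ m) (Set.mem_univ v) (by linarith) (le_of_lt ht0) (by ring)
    have hq : ∑ i, W i * (vt i - b i)^2
        = (1 - t) * ∑ i, W i * (m i - b i)^2 + t * ∑ i, W i * (v i - b i)^2
          - t * (1 - t) * ∑ i, W i * (v i - m i)^2 := by
      rw [Finset.mul_sum, Finset.mul_sum, Finset.mul_sum, ← Finset.sum_add_distrib,
        ← Finset.sum_sub_distrib]
      refine Finset.sum_congr rfl fun i _ => ?_
      have : vt i = (1 - t) * m i + t * v i := by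
        simp [hvt, PiLp.add_apply, PiLp.smul_apply]
      rw [this]; ring
    have hmin' := hmin vt hvtC
    have h2 : t * (c m + (1:ℝ)/2 * ∑ i, W i * (m i - b i)^2 + (1 - t) * X)
        ≤ t * (c v + (1:ℝ)/2 * ∑ i, W i * (v i - b i)^2) := by
      have : c m + (1:ℝ)/2 * ∑ i, W i * (m i - b i)^2
          ≤ (1-t) * c m + t * c v + (1:ℝ)/2 * ((1 - t) * ∑ i, W i * (m i - b i)^2
            + t * ∑ i, W i * (v i - b i)^2 - t * (1 - t) * ∑ i, W i * (v i - m i)^2) := by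
        calc c m + (1:ℝ)/2 * ∑ i, W i * (m i - b i)^2
            ≤ c vt + (1:ℝ)/2 * ∑ i, W i * (vt i - b i)^2 := hmin'
          _ ≤ _ := by rw [hq]; linarith
      rw [hXdef] at *; nlinarith [this]
    exact le_of_mul_le_mul_left h2 ht0
  have hfin : ∀ ε : ℝ, 0 < ε →
      c m + (1:ℝ)/2 * ∑ i, W i * (m i - b i)^2 + X
        ≤ c v + (1:ℝ)/2 * ∑ i, W i * (v i - b i)^2 + ε := by
    intro ε hε
    have ht0 : 0 < min 1 (ε / (X + 1)) := lt_min one_pos (by positivity)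
    have ht1 : min 1 (ε / (X + 1)) ≤ 1 := min_le_left _ _
    have := hkey _ ht0 ht1
    have htX : min 1 (ε / (X + 1)) * X ≤ ε := by
      calc min 1 (ε / (X + 1)) * X ≤ (ε / (X + 1)) * X :=
            mul_le_mul_of_nonneg_right (min_le_right _ _) hX
        _ ≤ ε := by
            rw [div_mul_eq_mul_div, div_le_iff₀ (by linarith)]
            nlinarith
    nlinarith [this]
  linarith [le_of_forall_pos_le_add (hfin)]

lemma flag_line_hasDerivAt {d : ℕ} (x w : EuclideanSpace ℝ (Fin d)) (t : ℝ) :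
    HasDerivAt (fun t : ℝ => x + t • (w - x)) (w - x) t := by
  have h1 : HasDerivAt (fun t : ℝ => t • (w - x)) ((1:ℝ) • (w - x)) t :=
    (hasDerivAt_id t).smul_const (w - x)
  simpa using h1.const_add x

lemma flag_comp_line_hasDerivAt {d : ℕ} (f : EuclideanSpace ℝ (Fin d) → ℝ)
    (f' : EuclideanSpace ℝ (Fin d) → EuclideanSpace ℝ (Fin d))
    (hfdiff : ∀ v, HasGradientAt f (f' v) v) (x w : EuclideanSpace ℝ (Fin d)) (t : ℝ) :
    HasDerivAt (fun t : ℝ => f (x + t • (w - x))) ⟪f' (x + t • (w - x)), w - x⟫ t := by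
  have hf := (hfdiff (x + t • (w - x))).hasFDerivAt
  have := hf.comp_hasDerivAt t (flag_line_hasDerivAt x w t)
  exact this

lemma flag_convex_grad_ineq {d : ℕ} (f : EuclideanSpace ℝ (Fin d) → ℝ)
    (f' : EuclideanSpace ℝ (Fin d) → EuclideanSpace ℝ (Fin d))
    (hconv : ConvexOn ℝ Set.univ f) (hfdiff : ∀ v, HasGradientAt f (f' v) v)
    (x w : EuclideanSpace ℝ (Fin d)) : f x + ⟪f' x, w - x⟫ ≤ f w := by
  have hder : HasDerivAt (fun t : ℝ => f (x + t • (w - x))) ⟪f' x, w - x⟫ 0 := by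
    have := flag_comp_line_hasDerivAt f f' hfdiff x w 0
    simpa using this
  have hslope := hder.hasDerivWithinAt (s := Set.Ioi (0:ℝ))
  rw [hasDerivWithinAt_iff_tendsto_slope] at hslope
  have hsub : Set.Ioi (0:ℝ) \ {0} = Set.Ioi 0 := by
    ext t; simp (config := {contextual := true}) [ne_of_gt]
  rw [hsub] at hslope
  have hev : ∀ᶠ t in nhdsWithin (0:ℝ) (Set.Ioi 0),
      slope (fun t : ℝ => f (x + t • (w - x))) 0 t ≤ f w - f x := by
    filter_upwards [Ioc_mem_nhdsGT_of_mem (by norm_num : (0:ℝ) ∈ Set.Ico 0 1)] with t ht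
    have ht0 : 0 < t := ht.1
    have ht1 : t ≤ 1 := ht.2
    have hcomb : x + t • (w - x) = (1 - t) • x + t • w := by
      rw [smul_sub, sub_smul, one_smul]; abel
    have hconvx : f (x + t • (w - x)) ≤ (1 - t) * f x + t * f w := by
      rw [hcomb]
      exact hconv.2 (Set.mem_univ x) (Set.mem_univ w) (by linarith) (le_of_lt ht0) (by ring)
    rw [slope_def_field]
    simp only [zero_smul, add_zero, sub_zero]
    rw [div_le_iff₀ ht0]
    nlinarith
  have := le_of_tendsto hslope hev
  linarith

lemma flag_descent_lemma {d : ℕ} {C : Set (EuclideanSpace ℝ (Fin d))} (hC : Convex ℝ C)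
    (f : EuclideanSpace ℝ (Fin d) → ℝ)
    (f' : EuclideanSpace ℝ (Fin d) → EuclideanSpace ℝ (Fin d))
    (hfdiff : ∀ v, HasGradientAt f (f' v) v) (L : ℝ)
    (hflip : ∀ a ∈ C, ∀ b ∈ C, ‖f' a - f' b‖ ≤ L * ‖a - b‖)
    (x w : EuclideanSpace ℝ (Fin d)) (hx : x ∈ C) (hw : w ∈ C) :
    f w ≤ f x + ⟪f' x, w - x⟫ + L / 2 * ‖w - x‖ ^ 2 := by
  set A : ℝ := ⟪f' x, w - x⟫ with hA
  set B : ℝ := L / 2 * ‖w - x‖ ^ 2 with hB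
  set G : ℝ → ℝ := fun t => f (x + t • (w - x)) - t * A - t ^ 2 * B with hG
  have hGder : ∀ t : ℝ, HasDerivAt G (⟪f' (x + t • (w - x)), w - x⟫ - A - 2 * t * B) t := by
    intro t
    have h1 := flag_comp_line_hasDerivAt f f' hfdiff x w t
    have h2 : HasDerivAt (fun t : ℝ => t * A) A t := by simpa using (hasDerivAt_id t).mul_const A
    have h3 : HasDerivAt (fun t : ℝ => t ^ 2 * B) (2 * t * B) t := by
      have := (hasDerivAt_pow 2 t).mul_const B
      simpa [mul_comm] using this
    exact (h1.sub h2).sub h3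
  have hanti : AntitoneOn G (Set.Icc 0 1) := by
    apply antitoneOn_of_deriv_nonpos (convex_Icc 0 1)
    · exact fun t _ => ((hGder t).differentiableAt).continuousAt.continuousWithinAt
    · intro t ht
      exact ((hGder t).differentiableAt).differentiableWithinAt
    · intro t ht
      rw [interior_Icc] at ht
      rw [(hGder t).deriv]
      have hxt : x + t • (w - x) ∈ C := by
        have hcomb : x + t • (w - x) = (1 - t) • x + t • w := by
          rw [smul_sub, sub_smul, one_smul]; abel
        rw [hcomb]
        exact hC hx hw (by linarith [ht.2]) (le_of_lt ht.1) (by ring)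
      have hlip := hflip _ hxt _ hx
      have hinner : ⟪f' (x + t • (w - x)) - f' x, w - x⟫
          ≤ ‖f' (x + t • (w - x)) - f' x‖ * ‖w - x‖ := real_inner_le_norm _ _
      have hd : ‖x + t • (w - x) - x‖ = t * ‖w - x‖ := by
        rw [add_sub_cancel_left, norm_smul, Real.norm_eq_abs, abs_of_pos ht.1]
      rw [hd] at hlip
      have hexp : ⟪f' (x + t • (w - x)) - f' x, w - x⟫
          = ⟪f' (x + t • (w - x)), w - x⟫ - A := by
        rw [inner_sub_left, hA]
      nlinarith [norm_nonneg (w - x), ht.1.le,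
        mul_le_mul_of_nonneg_right hlip (norm_nonneg (w - x))]
  have h01 := hanti (Set.mem_Icc.mpr ⟨le_refl 0, zero_le_one⟩)
    (Set.mem_Icc.mpr ⟨zero_le_one, le_refl 1⟩) zero_le_one
  simp only [hG] at h01
  simp only [zero_smul, add_zero, one_smul, zero_mul, sub_zero, zero_pow, one_mul, one_pow] at h01
  have : x + (w - x) = w := by abel
  rw [this] at h01
  linarith

end FlagAux

/-- **Master Theorem** (Theorem 2) for FLAG, with `η₀² L₀` interpreted as `0`
and `∑ᵢ s_T(i) + δ d` the trace of `S_T = diag(s_T) + δ I`. -/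
theorem flag_master_theorem
    {d : ℕ} (hd : 1 ≤ d) (T : ℕ) (hT : 1 ≤ T)
    (C : Set (EuclideanSpace ℝ (Fin d)))
    (hCconv : Convex ℝ C) (hCclosed : IsClosed C)
    (D L δ : ℝ) (hL : 0 < L) (hδ : 0 < δ) (hD0 : 0 ≤ D)
    (hD : ∀ a ∈ C, ∀ b ∈ C, ∀ i : Fin d, (a i - b i) ^ 2 ≤ D)
    (f h : EuclideanSpace ℝ (Fin d) → ℝ)
    (f' : EuclideanSpace ℝ (Fin d) → EuclideanSpace ℝ (Fin d))
    (hfconv : ConvexOn ℝ Set.univ f) (hhconv : ConvexOn ℝ Set.univ h)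
    (hfdiff : ∀ v, HasGradientAt f (f' v) v)
    (hflip : ∀ a ∈ C, ∀ b ∈ C, ‖f' a - f' b‖ ≤ L * ‖a - b‖)
    (F : EuclideanSpace ℝ (Fin d) → ℝ) (hF : ∀ v, F v = f v + h v)
    (x y z p g : ℕ → EuclideanSpace ℝ (Fin d))
    (s : ℕ → Fin d → ℝ) (Lk η : ℕ → ℝ)
    (hinit : x 1 = y 1 ∧ y 1 = z 1)
    (hxC : ∀ k, 1 ≤ k → k ≤ T → x k ∈ C)
    -- `y (k+1) = prox (x k)`: it is the minimizer over `C` of the prox objective at `x k`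
    (hproxstep : ∀ k, 1 ≤ k → k ≤ T → y (k + 1) ∈ C ∧ ∀ w ∈ C,
      h (y (k + 1)) + ⟪f' (x k), y (k + 1) - x k⟫ + L / 2 * ‖y (k + 1) - x k‖ ^ 2
        ≤ h w + ⟪f' (x k), w - x k⟫ + L / 2 * ‖w - x k‖ ^ 2)
    (hp : ∀ k, 1 ≤ k → k ≤ T → p k = -L • (y (k + 1) - x k))
    (hpne : ∀ k, 1 ≤ k → k ≤ T → p k ≠ 0)
    (hg : ∀ k, 1 ≤ k → k ≤ T → g k = ‖p k‖⁻¹ • p k)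
    (hs : ∀ k, 1 ≤ k → k ≤ T → ∀ i : Fin d,
      s k i = Real.sqrt (∑ j ∈ Finset.Icc 1 k, g j i ^ 2))
    -- `L_k = L · g_kᵀ S_k⁻¹ g_k` with `S_k = diag(s_k) + δ I`
    (hLk : ∀ k, 1 ≤ k → k ≤ T → Lk k = L * ∑ i : Fin d, g k i ^ 2 / (s k i + δ))
    (hη1 : η 1 = 1 / Lk 1)
    (hηk : ∀ k, 2 ≤ k → k ≤ T →
      η k = 1 / (2 * Lk k)
        + Real.sqrt (1 / (4 * Lk k ^ 2) + η (k - 1) ^ 2 * Lk (k - 1) / Lk k))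
    -- mirror-descent step: `z (k+1)` minimizes `⟨η_k p_k, z − z_k⟩ + ½‖z − z_k‖²_{S_k}`
    (hmirror : ∀ k, 1 ≤ k → k ≤ T → z (k + 1) ∈ C ∧ ∀ w ∈ C,
      ⟪η k • p k, z (k + 1) - z k⟫
          + 1 / 2 * ∑ i : Fin d, (s k i + δ) * (z (k + 1) i - z k i) ^ 2
        ≤ ⟪η k • p k, w - z k⟫
          + 1 / 2 * ∑ i : Fin d, (s k i + δ) * (w i - z k i) ^ 2)
    -- binary-search guarantee
    (hbs : ∀ k, 1 ≤ k → k ≤ T →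
      ⟪p k, x k - z k⟫
        ≤ (η k * Lk k - 1) * ⟪p k, y k - x k⟫
          + D * L * (η k * Lk k) / (T : ℝ) ^ 3)
    (u : EuclideanSpace ℝ (Fin d)) (hu : u ∈ C) :
    ∑ k ∈ Finset.Icc 1 T,
        (((if k = 1 then 0 else η (k - 1) ^ 2 * Lk (k - 1))
            - η k ^ 2 * Lk k + η k) * F (y k) - η k * F u)
      + η T ^ 2 * Lk T * F (y (T + 1))
    ≤ (∑ k ∈ Finset.Icc 1 T, D * L * η k ^ 2 * Lk k / (T : ℝ) ^ 3)
      + D / 2 * ((∑ i : Fin d, s T i) + δ * d) := by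
  have hLne : L ≠ 0 := ne_of_gt hL
  -- membership facts
  have hyC : ∀ k, 1 ≤ k → k ≤ T → y k ∈ C := by
    intro k hk1 hk2
    rcases eq_or_lt_of_le hk1 with hh | hh
    · rw [← hh, ← hinit.1]; exact hxC 1 le_rfl hT
    · obtain ⟨j, rfl⟩ : ∃ j, k = j + 1 := ⟨k - 1, by omega⟩
      exact (hproxstep j (by omega) (by omega)).1
  have hzC : ∀ k, 1 ≤ k → k ≤ T + 1 → z k ∈ C := by
    intro k hk1 hk2
    rcases eq_or_lt_of_le hk1 with hh | hh
    · rw [← hh, ← hinit.2, ← hinit.1]; exact hxC 1 le_rfl hT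
    · obtain ⟨j, rfl⟩ : ∃ j, k = j + 1 := ⟨k - 1, by omega⟩
      exact (hmirror j (by omega) (by omega)).1
  -- positivity facts
  have hs0 : ∀ k, 1 ≤ k → k ≤ T → ∀ i, 0 ≤ s k i := by
    intro k hk1 hk2 i
    rw [hs k hk1 hk2 i]; exact Real.sqrt_nonneg _
  have hWpos : ∀ k, 1 ≤ k → k ≤ T → ∀ i, 0 < s k i + δ := by
    intro k hk1 hk2 i
    have := hs0 k hk1 hk2 i; linarith
  have hLkpos : ∀ k, 1 ≤ k → k ≤ T → 0 < Lk k := by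
    intro k hk1 hk2
    rw [hLk k hk1 hk2]
    apply mul_pos hL
    have hgne : g k ≠ 0 := by
      rw [hg k hk1 hk2]
      exact smul_ne_zero (inv_ne_zero (norm_ne_zero_iff.mpr (hpne k hk1 hk2))) (hpne k hk1 hk2)
    obtain ⟨i0, hi0⟩ : ∃ i, g k i ≠ 0 := by
      by_contra hcon; push_neg at hcon
      exact hgne (by ext i; exact hcon i)
    have hi0' : 0 < g k i0 ^ 2 := lt_of_le_of_ne (sq_nonneg _) (Ne.symm (pow_ne_zero 2 hi0))
    refine Finset.sum_pos' (fun i _ => div_nonneg (sq_nonneg _) (hWpos k hk1 hk2 i).le)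
      ⟨i0, Finset.mem_univ i0, div_pos hi0' (hWpos k hk1 hk2 i0)⟩
  have hηLk : ∀ k, 1 ≤ k → k ≤ T → 0 ≤ η k ∧ 1 ≤ η k * Lk k := by
    intro k hk1 hk2
    rcases eq_or_lt_of_le hk1 with hh | hh
    · subst hh
      have hpos := hLkpos 1 le_rfl hT
      rw [hη1]
      constructor
      · positivity
      · rw [div_mul_cancel₀ _ (ne_of_gt hpos)]
    · have hk2' : 2 ≤ k := hh
      have hLpos := hLkpos k hk1 hk2
      have hLpos' := hLkpos (k-1) (by omega) (by omega)
      rw [hηk k hk2' hk2]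
      have hsq : 1/(2*Lk k) ≤ Real.sqrt (1/(4*Lk k^2) + η (k-1)^2*Lk (k-1)/Lk k) := by
        have h4 : 1/(2*Lk k) = Real.sqrt (1/(4*Lk k^2)) := by
          rw [show 1/(4*Lk k^2) = (1/(2*Lk k))^2 by field_simp; ring,
            Real.sqrt_sq (by positivity)]
        rw [h4]
        apply Real.sqrt_le_sqrt
        have : 0 ≤ η (k-1)^2*Lk (k-1)/Lk k := by positivity
        linarith
      have h0 : 0 < 1/(2*Lk k) := by positivity
      constructor
      · linarith [Real.sqrt_nonneg (1/(4*Lk k^2) + η (k-1)^2*Lk (k-1)/Lk k)]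
      · have heta : 1/Lk k ≤ 1/(2*Lk k)
            + Real.sqrt (1/(4*Lk k^2) + η (k-1)^2*Lk (k-1)/Lk k) := by
          have : 1/(2*Lk k) + 1/(2*Lk k) = 1/Lk k := by
            rw [← add_div, show (1:ℝ)+1 = 2 by norm_num,
              div_eq_div_iff (by positivity) (ne_of_gt hLpos)]
            ring
          linarith
        rw [div_le_iff₀ hLpos] at heta
        linarith
  -- coordinate helpers
  have hnq : ∀ (v b : EuclideanSpace ℝ (Fin d)),
      L / 2 * ‖v - b‖ ^ 2 = (1:ℝ)/2 * ∑ i, L * (v i - b i)^2 := by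
    intro v b
    have hvb : ‖v - b‖^2 = ∑ i, (v i - b i)^2 := by
      rw [flag_norm_sq_euclid]
      exact Finset.sum_congr rfl fun i _ => by simp [PiLp.sub_apply]
    rw [hvb, Finset.mul_sum, Finset.mul_sum]
    exact Finset.sum_congr rfl fun i _ => by ring
  -- the per-step key inequality
  have key : ∀ k, 1 ≤ k → k ≤ T →
      (η k - η k^2 * Lk k) * F (y k) - η k * F u + η k^2 * Lk k * F (y (k+1))
        ≤ D * L * η k^2 * Lk k / (T:ℝ)^3
          + ((1:ℝ)/2 * ∑ i, (s k i + δ) * (u i - z k i)^2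
            - (1:ℝ)/2 * ∑ i, (s k i + δ) * (u i - z (k+1) i)^2) := by
    intro k hk1 hk2
    have hyk1C : y (k+1) ∈ C := (hproxstep k hk1 hk2).1
    have hxkC : x k ∈ C := hxC k hk1 hk2
    have hzkC : z k ∈ C := hzC k hk1 (by omega)
    have hzk1C : z (k+1) ∈ C := (hmirror k hk1 hk2).1
    have hykC : y k ∈ C := hyC k hk1 hk2
    have hW : ∀ i, 0 < s k i + δ := hWpos k hk1 hk2
    have hpnorm : ‖p k‖ ≠ 0 := norm_ne_zero_iff.mpr (hpne k hk1 hk2)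
    have hpco : ∀ i, p k i = -L * (y (k+1) i - x k i) := by
      intro i
      rw [hp k hk1 hk2]
      simp [PiLp.smul_apply, PiLp.sub_apply]
    have hpgc : ∀ i, p k i = ‖p k‖ * g k i := by
      intro i
      have hgg : g k i = ‖p k‖⁻¹ * p k i := by
        rw [hg k hk1 hk2]; simp [PiLp.smul_apply]
      rw [hgg, ← mul_assoc, mul_inv_cancel₀ hpnorm, one_mul]
    -- prox key : F (y (k+1)) ≤ F w + ⟪p k, x k - w⟫ - ‖p k‖²/(2L)
    have keyprox : ∀ w ∈ C, F (y (k+1)) ≤ F w + ⟪p k, x k - w⟫ - ‖p k‖^2 / (2*L) := by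
      intro w hw
      have hps := flag_strong_min hCconv (fun v => h v + ⟪f' (x k), v - x k⟫)
        (hhconv.add (flag_convexOn_inner_sub (f' (x k)) (x k)))
        (fun _ => L) (fun _ => hL.le) (x k) (y (k+1)) w hyk1C hw
        (by
          intro w' hw'
          have hps0 := (hproxstep k hk1 hk2).2 w' hw'
          rw [hnq (y (k+1)) (x k), hnq w' (x k)] at hps0
          exact hps0)
      have hps' : h (y (k+1)) + ⟪f' (x k), y (k+1) - x k⟫ + L/2 * ‖y (k+1) - x k‖^2
          + L/2 * ‖w - y (k+1)‖^2
          ≤ h w + ⟪f' (x k), w - x k⟫ + L/2 * ‖w - x k‖^2 := by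
        rw [hnq (y (k+1)) (x k), hnq w (x k), hnq w (y (k+1))]
        exact hps
      have hdes := flag_descent_lemma hCconv f f' hfdiff L hflip (x k) (y (k+1)) hxkC hyk1C
      have hgrad := flag_convex_grad_ineq f f' hfconv hfdiff (x k) w
      have hident : L/2 * ‖w - x k‖^2 - L/2 * ‖w - y (k+1)‖^2
          = ⟪p k, x k - w⟫ - ‖p k‖^2/(2*L) := by
        have e1 : ‖w - x k‖^2 = ∑ i, (w i - x k i)^2 := by
          rw [flag_norm_sq_euclid]
          exact Finset.sum_congr rfl fun i _ => by simp [PiLp.sub_apply]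
        have e2 : ‖w - y (k+1)‖^2 = ∑ i, (w i - y (k+1) i)^2 := by
          rw [flag_norm_sq_euclid]
          exact Finset.sum_congr rfl fun i _ => by simp [PiLp.sub_apply]
        have e3 : ⟪p k, x k - w⟫ = ∑ i, p k i * (x k i - w i) := by
          rw [flag_inner_euclid]
          exact Finset.sum_congr rfl fun i _ => by simp [PiLp.sub_apply]
        have e4 : ‖p k‖^2 = ∑ i, (p k i)^2 := flag_norm_sq_euclid _
        rw [e1, e2, e3, e4, Finset.mul_sum, Finset.mul_sum, Finset.sum_div,
          ← Finset.sum_sub_distrib, ← Finset.sum_sub_distrib]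
        refine Finset.sum_congr rfl fun i _ => ?_
        rw [hpco i]
        field_simp
        ring
      rw [hF (y (k+1)), hF w]
      linarith [hps', hdes, hgrad, hident]
    -- mirror key
    have hms : ⟪η k • p k, z (k+1) - z k⟫
          + (1:ℝ)/2 * ∑ i, (s k i + δ) * (z (k+1) i - z k i)^2
          + (1:ℝ)/2 * ∑ i, (s k i + δ) * (u i - z (k+1) i)^2
        ≤ ⟪η k • p k, u - z k⟫ + (1:ℝ)/2 * ∑ i, (s k i + δ) * (u i - z k i)^2 := by
      exact flag_strong_min hCconv (fun v => ⟪η k • p k, v - z k⟫)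
        (flag_convexOn_inner_sub (η k • p k) (z k)) (fun i => s k i + δ)
        (fun i => (hW i).le) (z k) (z (k+1)) u hzk1C hu
        (fun w' hw' => (hmirror k hk1 hk2).2 w' hw')
    have hsd : ∑ i, (p k i)^2 / (s k i + δ) = ‖p k‖^2 * Lk k / L := by
      have h1 : ∑ i, (p k i)^2 / (s k i + δ) = ‖p k‖^2 * ∑ i, (g k i)^2 / (s k i + δ) := by
        rw [Finset.mul_sum]
        exact Finset.sum_congr rfl fun i _ => by rw [hpgc i]; ring
      rw [h1, hLk k hk1 hk2]
      field_simp
    have hyoung : ⟪η k • p k, z k - z (k+1)⟫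
        ≤ η k^2 * (‖p k‖^2 * Lk k / L)/2
          + (1:ℝ)/2 * ∑ i, (s k i + δ) * (z (k+1) i - z k i)^2 := by
      have hper : ∀ i ∈ Finset.univ, (η k * p k i) * (z k i - z (k+1) i)
          ≤ η k^2 * (p k i)^2/(2*(s k i + δ)) + (s k i + δ) * (z (k+1) i - z k i)^2/2 := by
        intro i _
        have hWi := hW i
        have hkey : η k^2 * (p k i)^2/(2*(s k i + δ)) + (s k i + δ) * (z (k+1) i - z k i)^2/2
            - (η k * p k i) * (z k i - z (k+1) i)
            = (η k * p k i - (s k i + δ) * (z k i - z (k+1) i))^2 / (2*(s k i + δ)) := by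
          field_simp
          ring
        have : 0 ≤ (η k * p k i - (s k i + δ) * (z k i - z (k+1) i))^2 / (2*(s k i + δ)) :=
          div_nonneg (sq_nonneg _) (by linarith)
        linarith [hkey ▸ this]
      have hsum := Finset.sum_le_sum hper
      have hL1 : ⟪η k • p k, z k - z (k+1)⟫ = ∑ i, (η k * p k i) * (z k i - z (k+1) i) := by
        rw [flag_inner_euclid]
        exact Finset.sum_congr rfl fun i _ => by simp [PiLp.smul_apply, PiLp.sub_apply]
      have hR : ∑ i, (η k^2 * (p k i)^2/(2*(s k i + δ)) + (s k i + δ) * (z (k+1) i - z k i)^2/2)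
          = η k^2 * (‖p k‖^2 * Lk k / L)/2
            + (1:ℝ)/2 * ∑ i, (s k i + δ) * (z (k+1) i - z k i)^2 := by
        rw [Finset.sum_add_distrib]
        congr 1
        · have : ∑ i, η k^2 * (p k i)^2/(2*(s k i + δ))
              = η k^2/2 * ∑ i, (p k i)^2/(s k i + δ) := by
            rw [Finset.mul_sum]
            refine Finset.sum_congr rfl fun i _ => ?_
            have := (hW i).ne'
            field_simp
          rw [this, hsd]; ring
        · rw [Finset.mul_sum]
          exact Finset.sum_congr rfl fun i _ => by ring
      rw [hL1]
      exact hsum.trans_eq hR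
    have hsplit2 : ⟪η k • p k, z (k+1) - z k⟫ - ⟪η k • p k, u - z k⟫
        = ⟪η k • p k, z (k+1) - u⟫ := by
      rw [← inner_sub_right]; congr 1; abel
    have hsplit3 : ⟪η k • p k, z k - u⟫
        = ⟪η k • p k, z k - z (k+1)⟫ + ⟪η k • p k, z (k+1) - u⟫ := by
      rw [← inner_add_right]; congr 1; abel
    have mirror_key : η k * ⟪p k, z k - u⟫
        ≤ ((1:ℝ)/2 * ∑ i, (s k i + δ) * (u i - z k i)^2
            - (1:ℝ)/2 * ∑ i, (s k i + δ) * (u i - z (k+1) i)^2)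
          + η k^2 * Lk k * (‖p k‖^2/(2*L)) := by
      rw [← real_inner_smul_left]
      have e5 : η k^2 * (‖p k‖^2 * Lk k / L)/2 = η k^2 * Lk k * (‖p k‖^2/(2*L)) := by ring
      linarith [hms, hyoung, hsplit2, hsplit3]
    -- assemble scalars
    have hη := hηLk k hk1 hk2
    have hP2 : (0:ℝ) ≤ ‖p k‖^2/(2*L) := by positivity
    have hA : ⟪p k, x k - u⟫ = ⟪p k, x k - z k⟫ + ⟪p k, z k - u⟫ := by
      rw [← inner_add_right]; congr 1; abel
    have hBtrans : ⟪p k, x k - y k⟫ = -⟪p k, y k - x k⟫ := by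
      rw [← inner_neg_right]; congr 1; abel
    have h1 := keyprox u hu
    have h2 := keyprox (y k) hykC
    have h3 := hbs k hk1 hk2
    have hm1 := mul_le_mul_of_nonneg_left h1 hη.1
    have hm3base : ⟪p k, y k - x k⟫ ≤ F (y k) - F (y (k+1)) - ‖p k‖^2/(2*L) := by
      rw [hBtrans] at h2; linarith
    have hc : 0 ≤ η k * (η k * Lk k - 1) := mul_nonneg hη.1 (by linarith [hη.2])
    have hm3 := mul_le_mul_of_nonneg_left hm3base hc
    have hm2 := mul_le_mul_of_nonneg_left h3 hη.1
    have hA' : η k * ⟪p k, x k - u⟫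
        = η k * ⟪p k, x k - z k⟫ + η k * ⟪p k, z k - u⟫ := by rw [hA]; ring
    set SA := ∑ i, (s k i + δ) * (u i - z k i)^2 with hSA
    set SB := ∑ i, (s k i + δ) * (u i - z (k+1) i)^2 with hSB
    ring_nf at hm1 hm2 hm3 mirror_key hA' ⊢
    linarith [hm1, hm2, hm3, mirror_key, hA']
  -- monotonicity of s
  have hsmono : ∀ j, 1 ≤ j → j + 1 ≤ T → ∀ i, s j i ≤ s (j+1) i := by
    intro j hj1 hj2 i
    rw [hs j hj1 (by omega) i, hs (j+1) (by omega) hj2 i]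
    apply Real.sqrt_le_sqrt
    apply Finset.sum_le_sum_of_subset_of_nonneg
    · exact Finset.Icc_subset_Icc_right (by omega)
    · intro m _ _; exact sq_nonneg _
  have step2 : ∀ j, 1 ≤ j → j + 1 ≤ T →
      (1:ℝ)/2 * ∑ i, (s (j+1) i + δ) * (u i - z (j+1) i)^2
        - (1:ℝ)/2 * ∑ i, (s j i + δ) * (u i - z (j+1) i)^2
      ≤ D/2 * ((∑ i, s (j+1) i) - ∑ i, s j i) := by
    intro j hj1 hj2
    have hzj : z (j+1) ∈ C := hzC (j+1) (by omega) (by omega)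
    have hper : ∀ i ∈ Finset.univ,
        (s (j+1) i + δ) * (u i - z (j+1) i)^2 - (s j i + δ) * (u i - z (j+1) i)^2
          ≤ (s (j+1) i - s j i) * D := by
      intro i _
      have hmono := hsmono j hj1 hj2 i
      have hDb := hD u hu (z (j+1)) hzj i
      nlinarith [sq_nonneg (u i - z (j+1) i)]
    have hsum := Finset.sum_le_sum hper
    rw [Finset.sum_sub_distrib] at hsum
    have e2 : ∑ i, (s (j+1) i - s j i) * D = ((∑ i, s (j+1) i) - ∑ i, s j i) * D := by
      rw [← Finset.sum_mul, Finset.sum_sub_distrib]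
    rw [e2] at hsum
    linarith
  have base1 : (1:ℝ)/2 * ∑ i, (s 1 i + δ) * (u i - z 1 i)^2
      ≤ D/2 * ((∑ i, s 1 i) + δ * d) := by
    have hz1 : z 1 ∈ C := hzC 1 le_rfl (by omega)
    have hper : ∀ i ∈ Finset.univ, (s 1 i + δ) * (u i - z 1 i)^2 ≤ (s 1 i + δ) * D :=
      fun i _ => mul_le_mul_of_nonneg_left (hD u hu (z 1) hz1 i)
        (by linarith [hs0 1 le_rfl hT i])
    have hsum := Finset.sum_le_sum hper
    have e : ∑ i, (s 1 i + δ) * D = ((∑ i, s 1 i) + δ * d) * D := by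
      rw [← Finset.sum_mul, Finset.sum_add_distrib, Finset.sum_const, Finset.card_univ,
        Fintype.card_fin, nsmul_eq_mul]
      ring
    rw [e] at hsum
    linarith
  have claim : ∀ n, 1 ≤ n → n ≤ T →
      (∑ k ∈ Finset.Icc 1 n,
        (((if k = 1 then 0 else η (k - 1) ^ 2 * Lk (k - 1)) - η k ^ 2 * Lk k + η k) * F (y k)
          - η k * F u))
      + η n ^ 2 * Lk n * F (y (n + 1))
      + (1:ℝ)/2 * ∑ i, (s n i + δ) * (u i - z (n+1) i)^2
      ≤ (∑ k ∈ Finset.Icc 1 n, D * L * η k ^ 2 * Lk k / (T : ℝ) ^ 3)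
        + D / 2 * ((∑ i, s n i) + δ * d) := by
    intro n hn
    induction n, hn using Nat.le_induction with
    | base =>
      intro _
      rw [show Finset.Icc 1 1 = {1} from Finset.Icc_self 1, Finset.sum_singleton,
        Finset.sum_singleton, if_pos rfl]
      have hk := key 1 le_rfl hT
      linarith [base1, hk]
    | succ n hn ih =>
      intro hsucc
      have hnT : n ≤ T := by omega
      have ihh := ih hnT
      rw [Finset.sum_Icc_succ_top (by omega : 1 ≤ n+1), Finset.sum_Icc_succ_top (by omega : 1 ≤ n+1),
        if_neg (by omega : ¬ n+1 = 1), show n + 1 - 1 = n from rfl]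
      have hk := key (n+1) (by omega) hsucc
      have hst := step2 n hn hsucc
      linarith [ihh, hk, hst]
  have hfinal := claim T hT le_rfl
  have hPsiT : (0:ℝ) ≤ (1:ℝ)/2 * ∑ i, (s T i + δ) * (u i - z (T+1) i)^2 := by
    apply mul_nonneg (by norm_num)
    exact Finset.sum_nonneg fun i _ =>
      mul_nonneg (by linarith [hs0 T hT le_rfl i]) (sq_nonneg _)
  linarith
end
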